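/- arXiv:2604.07639 — 6 statements merged into one kernel-verified Lean document; each statement's English description precedes it below -/
import Mathlib

section
/- Let U be a fixed isometry with U†U = I, and let V be a random isometry (finitely supported) with V†V = I almost surely. Then for every unit vector |ψ⟩: (1/2)·‖U|ψ⟩⟨ψ|U† − E[V|ψ⟩⟨ψ|V†]‖₁ ≤ 2‖(U − E[V])|ψ⟩‖₂. -/
open Matrix
open scoped ComplexOrder

/-- Trace norm of a complex matrix: `tr √(AᴴA)`. -/
noncomputable def traceNorm {m n : Type*} [Fintype m] [Fintype n] [DecidableEq n]
    (A : Matrix m n ℂ) : ℝ :=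
  ((Matrix.posSemidef_conjTranspose_mul_self A).1.eigenvectorUnitary.1 *
    diagonal (((↑) : ℝ → ℂ) ∘ (√·) ∘ (Matrix.posSemidef_conjTranspose_mul_self A).1.eigenvalues) *
    (star (Matrix.posSemidef_conjTranspose_mul_self A).1.eigenvectorUnitary : Matrix n n ℂ)).trace.re

/-- The rank-one outer product `|v⟩⟨v|`. -/
noncomputable def outer {m : Type*} (v : m → ℂ) : Matrix m m ℂ :=
  Matrix.vecMulVec v (star v)


lemma psd_diag_re_nonneg {n : Type*} [Fintype n] [DecidableEq n] {M : Matrix n n ℂ}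
    (hM : M.PosSemidef) (i : n) : 0 ≤ (M i i).re := by
  have := hM.dotProduct_mulVec_nonneg (Pi.single i 1)
  simp [dotProduct, mulVec, Pi.single_apply] at this
  rw [Complex.le_def] at this
  simpa using this.1

lemma psd_diag_im_zero {n : Type*} [Fintype n] [DecidableEq n] {M : Matrix n n ℂ}
    (hM : M.PosSemidef) (i : n) : (M i i).im = 0 := by
  have := hM.dotProduct_mulVec_nonneg (Pi.single i 1)
  simp [dotProduct, mulVec, Pi.single_apply] at this
  rw [Complex.le_def] at this
  simpa using this.2.symm

lemma traceNorm_le_of_decomp {n : Type*} [Fintype n] [DecidableEq n]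
    {Δ P N : Matrix n n ℂ} (hP : P.PosSemidef) (hN : N.PosSemidef) (hΔ : Δ = P - N) :
    traceNorm Δ ≤ P.trace.re + N.trace.re := by
  have hherm : Δ.IsHermitian := hΔ ▸ hP.1.sub hN.1
  set W : Matrix n n ℂ := (hherm.eigenvectorUnitary : Matrix n n ℂ) with hW
  have hWu : Wᴴ * W = 1 := by
    simpa [hW, star_eq_conjTranspose] using (hherm.eigenvectorUnitary).2.1
  have hWu' : W * Wᴴ = 1 := by
    simpa [hW, star_eq_conjTranspose] using (hherm.eigenvectorUnitary).2.2
  set lam := hherm.eigenvalues with hlam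
  set S : Matrix n n ℂ := W * diagonal (fun i => (Complex.ofReal |lam i|)) * Wᴴ with hS
  have hSpsd : S.PosSemidef := by
    refine PosSemidef.mul_mul_conjTranspose_same ?_ W
    refine posSemidef_diagonal_iff.mpr fun i => ?_
    simpa using Complex.zero_le_real.mpr (abs_nonneg (lam i))
  have hspec : Δ = W * diagonal (fun i => (lam i : ℂ)) * Wᴴ := by
    simpa [hW, star_eq_conjTranspose, Function.comp_def] using hherm.spectral_theorem
  have hconj : ∀ A B : Matrix n n ℂ, (W * A * Wᴴ) * (W * B * Wᴴ) = W * (A * B) * Wᴴ := by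
    intro A B
    rw [Matrix.mul_assoc (W * A) Wᴴ (W * B * Wᴴ), ← Matrix.mul_assoc Wᴴ (W * B) Wᴴ,
      ← Matrix.mul_assoc Wᴴ W B, hWu, Matrix.one_mul, ← Matrix.mul_assoc, Matrix.mul_assoc W A B]
  have hsq : S ^ 2 = Δᴴ * Δ := by
    have habs : (fun i => Complex.ofReal |lam i| * Complex.ofReal |lam i|)
        = fun i => (lam i : ℂ) * (lam i : ℂ) := by
      funext i
      rw [← Complex.ofReal_mul, ← Complex.ofReal_mul, abs_mul_abs_self]
    rw [pow_two, hS, hherm.eq, hconj, diagonal_mul_diagonal, habs,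
      hspec, hconj, diagonal_mul_diagonal]
  have htn : traceNorm Δ = ∑ i, |lam i| := by
    have hA := (Matrix.posSemidef_conjTranspose_mul_self Δ).1
    have e1 : traceNorm Δ = (hA.cfc Real.sqrt).trace.re := by
      rw [traceNorm, IsHermitian.cfc, Unitary.conjStarAlgAut_apply]
      rfl
    have e2 : hA.cfc Real.sqrt = hherm.cfc (fun x => |x|) := by
      rw [← hA.cfc_eq, ← hherm.cfc_eq, hherm.eq, ← pow_two, ← cfc_pow_id (R := ℝ) Δ 2,
        ← cfc_comp' Real.sqrt (· ^ 2) Δ]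
      exact cfc_congr fun x _ => Real.sqrt_sq_eq_abs x
    rw [e1, e2, IsHermitian.cfc, Unitary.conjStarAlgAut_apply, Matrix.trace_mul_cycle]
    simp [star_eq_conjTranspose, ← hW, hWu, trace_diagonal]
    rfl
  rw [htn]
  -- diagonal entries of conjugated P, N
  have hPc : (Wᴴ * P * W).PosSemidef := hP.conjTranspose_mul_mul_same W
  have hNc : (Wᴴ * N * W).PosSemidef := hN.conjTranspose_mul_mul_same W
  have hdiagΔ : Wᴴ * Δ * W = diagonal (fun i => (lam i : ℂ)) := by
    rw [hspec]
    simp only [Matrix.mul_assoc]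
    rw [hWu, Matrix.mul_one, ← Matrix.mul_assoc, hWu, Matrix.one_mul]
  have key : ∀ i, |lam i| ≤ ((Wᴴ * P * W) i i).re + ((Wᴴ * N * W) i i).re := by
    intro i
    have h1 : (lam i : ℂ) = (Wᴴ * P * W) i i - (Wᴴ * N * W) i i := by
      have : (Wᴴ * Δ * W) i i = (Wᴴ * P * W) i i - (Wᴴ * N * W) i i := by
        rw [hΔ]
        simp [Matrix.mul_sub, Matrix.sub_mul]
      rw [hdiagΔ] at this
      simpa using this
    have h2 : lam i = ((Wᴴ * P * W) i i).re - ((Wᴴ * N * W) i i).re := by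
      have := congrArg Complex.re h1
      simpa using this
    rw [h2]
    have hp' := psd_diag_re_nonneg hPc i
    have hn' := psd_diag_re_nonneg hNc i
    rw [abs_le]
    constructor <;> linarith
  calc ∑ i, |lam i| ≤ ∑ i, (((Wᴴ * P * W) i i).re + ((Wᴴ * N * W) i i).re) :=
        Finset.sum_le_sum fun i _ => key i
    _ = (Wᴴ * P * W).trace.re + (Wᴴ * N * W).trace.re := by
        rw [Finset.sum_add_distrib]
        simp [Matrix.trace, Matrix.diag, Complex.re_sum]
    _ = P.trace.re + N.trace.re := by
        rw [Matrix.trace_mul_cycle Wᴴ P W, hWu', Matrix.one_mul,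
          Matrix.trace_mul_cycle Wᴴ N W, hWu', Matrix.one_mul]
namespace MixAux

open Complex

variable {n : Type*} [Fintype n]

noncomputable def sqn (z : n → ℂ) : ℝ := ∑ i, Complex.normSq (z i)

lemma sqn_nonneg (z : n → ℂ) : 0 ≤ sqn z :=
  Finset.sum_nonneg fun i _ => Complex.normSq_nonneg _

lemma trace_outer (z : n → ℂ) : (outer z).trace = ((sqn z : ℝ) : ℂ) := by
  simp [outer, Matrix.trace, Matrix.diag, vecMulVec_apply, sqn, Complex.mul_conj]

lemma outer_posSemidef (z : n → ℂ) : (outer z).PosSemidef := by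
  refine Matrix.PosSemidef.of_dotProduct_mulVec_nonneg ?_ ?_
  · ext i j
    simp [outer, vecMulVec_apply, Matrix.conjTranspose_apply, mul_comm]
  · intro x
    have h1 : outer z *ᵥ x = (star z ⬝ᵥ x) • z := by
      funext i
      simp [outer, Matrix.mulVec, vecMulVec_apply, dotProduct, Finset.mul_sum, mul_assoc,
        mul_comm, mul_left_comm]
    rw [h1]
    have h2 : star x ⬝ᵥ ((star z ⬝ᵥ x) • z) = (star z ⬝ᵥ x) * (star x ⬝ᵥ z) := by
      rw [dotProduct_smul, smul_eq_mul]
    rw [h2]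
    have h3 : star x ⬝ᵥ z = star (star z ⬝ᵥ x) := by
      simp [dotProduct, mul_comm]
    rw [h3, mul_comm]
    exact star_mul_self_nonneg _
 
lemma smul_psd (r : ℝ) (hr : 0 ≤ r) {M : Matrix n n ℂ} (hM : M.PosSemidef) :
    ((r : ℂ) • M).PosSemidef := by
  refine Matrix.PosSemidef.of_dotProduct_mulVec_nonneg ?_ ?_
  · rw [Matrix.IsHermitian, Matrix.conjTranspose_smul, hM.1]
    congr 1
    simp [Complex.star_def, Complex.conj_ofReal]
  · intro x
    have h1 : ((r : ℂ) • M) *ᵥ x = (r : ℂ) • (M *ᵥ x) := by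
      rw [Matrix.smul_mulVec]
    rw [h1, dotProduct_smul, smul_eq_mul]
    exact mul_nonneg (Complex.zero_le_real.mpr hr) (hM.dotProduct_mulVec_nonneg x)

lemma sqn_smul_add (r : ℝ) (z w : n → ℂ) :
    sqn ((r : ℂ) • z + w) + sqn ((r : ℂ) • z - w) = 2 * r ^ 2 * sqn z + 2 * sqn w := by
  have key : ∀ i, Complex.normSq (((r : ℂ) • z + w) i) + Complex.normSq (((r : ℂ) • z - w) i)
      = 2 * r ^ 2 * Complex.normSq (z i) + 2 * Complex.normSq (w i) := by
    intro i
    simp only [Pi.add_apply, Pi.sub_apply, Pi.smul_apply, smul_eq_mul, Complex.normSq_apply,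
      Complex.add_re, Complex.add_im, Complex.sub_re, Complex.sub_im, Complex.mul_re,
      Complex.mul_im, Complex.ofReal_re, Complex.ofReal_im]
    ring
  simp only [sqn, ← Finset.sum_add_distrib]
  rw [Finset.sum_congr rfl fun i _ => key i, Finset.sum_add_distrib, ← Finset.mul_sum,
    ← Finset.mul_sum]

end MixAux
namespace MixAux

variable {n : Type*} [Fintype n]

lemma sqn_smul (r : ℝ) (z : n → ℂ) : sqn ((r : ℂ) • z) = r ^ 2 * sqn z := by
  simp only [sqn, Finset.mul_sum]
  refine Finset.sum_congr rfl fun i _ => ?_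
  simp only [Pi.smul_apply, smul_eq_mul, Complex.normSq_mul, Complex.normSq_ofReal]
  ring

lemma psd_trace_re_nonneg {M : Matrix n n ℂ} [DecidableEq n] (hM : M.PosSemidef) :
    0 ≤ M.trace.re := by
  rw [Matrix.trace]
  simp only [Matrix.diag, Complex.re_sum]
  exact Finset.sum_nonneg fun i _ => psd_diag_re_nonneg hM i

lemma norm_e (z : n → ℂ) : ‖(WithLp.equiv 2 (n → ℂ)).symm z‖ = Real.sqrt (sqn z) := by
  rw [EuclideanSpace.norm_eq]
  congr 1
  refine Finset.sum_congr rfl fun i _ => ?_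
  show ‖z i‖ ^ 2 = _
  rw [Complex.sq_norm]

set_option maxHeartbeats 1000000 in
lemma main_ineq [DecidableEq n] {K : ℕ}
    (p : Fin K → ℝ) (hp : ∀ i, 0 ≤ p i) (hps : ∑ i, p i = 1)
    (u : n → ℂ) (v : Fin K → n → ℂ) (hu : sqn u = 1) (hv : ∀ i, sqn (v i) = 1) :
    traceNorm (outer u - ∑ i, (p i : ℂ) • outer (v i))
      ≤ 4 * Real.sqrt (sqn (u - ∑ i, (p i : ℂ) • v i)) := by
  set m : n → ℂ := ∑ i, (p i : ℂ) • v i with hm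
  set d : n → ℂ := u - m with hd
  set S : Matrix n n ℂ := ∑ i, (p i : ℂ) • outer (v i - m) with hS
  have hma : ∀ a, m a = ∑ i, (p i : ℂ) * v i a := by
    intro a
    rw [hm]
    simp [Finset.sum_apply]
  have hmb : ∀ b, (starRingEnd ℂ) (m b) = ∑ i, (p i : ℂ) * (starRingEnd ℂ) (v i b) := by
    intro b
    rw [hma b, map_sum]
    refine Finset.sum_congr rfl fun i _ => ?_
    simp [Complex.conj_ofReal]
  have hp1 : (∑ i, (p i : ℂ)) = 1 := by
    rw [← Complex.ofReal_sum, hps, Complex.ofReal_one]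
  have hident1 : ∑ i, (p i : ℂ) • outer (v i) = outer m + S := by
    ext a b
    simp only [Matrix.sum_apply, Matrix.add_apply, Matrix.smul_apply, smul_eq_mul, outer,
      vecMulVec_apply, Pi.star_apply, Pi.sub_apply, Complex.star_def, map_sub, hS]
    have hterm : ∀ i ∈ Finset.univ, (p i : ℂ) * ((v i a - m a) *
        ((starRingEnd ℂ) (v i b) - (starRingEnd ℂ) (m b)))
        = (p i : ℂ) * (v i a * (starRingEnd ℂ) (v i b))
          - ((p i : ℂ) * v i a) * (starRingEnd ℂ) (m b)
          - m a * ((p i : ℂ) * (starRingEnd ℂ) (v i b))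
          + (p i : ℂ) * (m a * (starRingEnd ℂ) (m b)) := fun i _ => by ring
    rw [Finset.sum_congr rfl hterm, Finset.sum_add_distrib, Finset.sum_sub_distrib,
      Finset.sum_sub_distrib, ← Finset.sum_mul, ← Finset.mul_sum, ← Finset.sum_mul,
      ← hma, ← hmb, hp1]
    ring
  have hSpsd : S.PosSemidef := by
    rw [hS]
    refine Finset.sum_induction _ _ (fun A B hA hB => hA.add hB) Matrix.PosSemidef.zero
      fun i _ => smul_psd (p i) (hp i) (outer_posSemidef _)
  have htrS : S.trace = ((1 - sqn m : ℝ) : ℂ) := by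
    have h := congrArg Matrix.trace hident1
    rw [Matrix.trace_sum, Matrix.trace_add, trace_outer] at h
    simp only [Matrix.trace_smul, smul_eq_mul, trace_outer, hv, Complex.ofReal_one, mul_one] at h
    rw [hp1] at h
    push_cast
    linear_combination -h
  have hsqm : sqn m ≤ 1 := by
    have h0 : 0 ≤ S.trace.re := psd_trace_re_nonneg hSpsd
    rw [htrS, Complex.ofReal_re] at h0
    linarith
  set nd := Real.sqrt (sqn d) with hnd
  set nm := Real.sqrt (sqn m) with hnm
  have hnd0 : 0 ≤ nd := Real.sqrt_nonneg _
  have hnm0 : 0 ≤ nm := Real.sqrt_nonneg _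
  have hnm1 : nm ≤ 1 := Real.sqrt_le_one.mpr hsqm
  have hsqnd : sqn d = nd ^ 2 := (Real.sq_sqrt (sqn_nonneg d)).symm
  have hsqnm : sqn m = nm ^ 2 := (Real.sq_sqrt (sqn_nonneg m)).symm
  have htri : 1 - nm ≤ nd := by
    have h1 : (WithLp.equiv 2 (n → ℂ)).symm u - (WithLp.equiv 2 (n → ℂ)).symm m
        = (WithLp.equiv 2 (n → ℂ)).symm d := rfl
    have h2 := norm_sub_norm_le ((WithLp.equiv 2 (n → ℂ)).symm u) ((WithLp.equiv 2 (n → ℂ)).symm m)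
    rw [h1, norm_e, norm_e, norm_e, hu, Real.sqrt_one] at h2
    exact h2
  by_cases hd0 : sqn d = 0
  · have hdz : d = 0 := by
      funext i
      have := (Finset.sum_eq_zero_iff_of_nonneg
        (fun j _ => Complex.normSq_nonneg (d j))).mp hd0 i (Finset.mem_univ i)
      simpa using Complex.normSq_eq_zero.mp this
    have hum : u = m := by
      have := hd.symm.trans hdz
      rwa [sub_eq_zero] at this
    have hΔ : outer u - ∑ i, (p i : ℂ) • outer (v i) = (0 : Matrix n n ℂ) - S := by
      rw [hident1, hum]
      abel
    have hb := traceNorm_le_of_decomp Matrix.PosSemidef.zero hSpsd hΔ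
    rw [Matrix.trace_zero, htrS] at hb
    simp only [Complex.zero_re, Complex.ofReal_re, zero_add] at hb
    have hsm1 : sqn m = 1 := by rw [← hum, hu]
    rw [hsm1] at hb
    have : nd = 0 := by rw [hnd, hd0, Real.sqrt_zero]
    rw [this]
    simpa using hb
  · have hndpos : 0 < nd := Real.sqrt_pos.mpr (lt_of_le_of_ne (sqn_nonneg d) (Ne.symm hd0))
    set a := Real.sqrt nd with ha
    have hapos : 0 < a := Real.sqrt_pos.mpr hndpos
    have ha2 : a ^ 2 = nd := Real.sq_sqrt hnd0
    have hc12 : ((a : ℝ) : ℂ) * ((a⁻¹ : ℝ) : ℂ) = 1 := by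
      rw [← Complex.ofReal_mul, mul_inv_cancel₀ hapos.ne', Complex.ofReal_one]
    set x1 : n → ℂ := ((a : ℝ) : ℂ) • u + ((a⁻¹ : ℝ) : ℂ) • d with hx1
    set y1 : n → ℂ := ((a : ℝ) : ℂ) • u - ((a⁻¹ : ℝ) : ℂ) • d with hy1
    set x2 : n → ℂ := ((a⁻¹ : ℝ) : ℂ) • d + ((a : ℝ) : ℂ) • m with hx2
    set y2 : n → ℂ := ((a⁻¹ : ℝ) : ℂ) • d - ((a : ℝ) : ℂ) • m with hy2
    set P : Matrix n n ℂ := (1/4 : ℂ) • outer x1 + (1/4 : ℂ) • outer x2 with hP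
    set N : Matrix n n ℂ := ((1/4 : ℂ) • outer y1 + (1/4 : ℂ) • outer y2) + S with hN
    have hident2 : outer u - outer m
        = ((1/4 : ℂ) • outer x1 + (1/4 : ℂ) • outer x2)
          - ((1/4 : ℂ) • outer y1 + (1/4 : ℂ) • outer y2) := by
      ext e f
      simp only [Matrix.sub_apply, Matrix.add_apply, Matrix.smul_apply, smul_eq_mul, outer,
        vecMulVec_apply, Pi.star_apply, Complex.star_def, hx1, hy1, hx2, hy2, hd,
        Pi.add_apply, Pi.sub_apply, Pi.smul_apply, map_add, map_sub, _root_.map_mul,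
        Complex.conj_ofReal]
      linear_combination (m e * (starRingEnd ℂ) (m f) - u e * (starRingEnd ℂ) (u f)) * hc12
    have hΔ : outer u - ∑ i, (p i : ℂ) • outer (v i) = P - N := by
      rw [hident1, hP, hN, sub_add_eq_sub_sub, hident2]
      abel
    have quarter : (1/4 : ℂ) = ((1/4 : ℝ) : ℂ) := by norm_num
    have hPpsd : P.PosSemidef := by
      rw [hP, quarter]
      exact (smul_psd _ (by norm_num) (outer_posSemidef _)).add
        (smul_psd _ (by norm_num) (outer_posSemidef _))
    have hNpsd : N.PosSemidef := by
      rw [hN, quarter]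
      exact ((smul_psd _ (by norm_num) (outer_posSemidef _)).add
        (smul_psd _ (by norm_num) (outer_posSemidef _))).add hSpsd
    have hb := traceNorm_le_of_decomp hPpsd hNpsd hΔ
    have htrP : P.trace.re = (1/4) * (sqn x1 + sqn x2) := by
      rw [hP, Matrix.trace_add, Matrix.trace_smul, Matrix.trace_smul, trace_outer, trace_outer,
        quarter]
      rw [smul_eq_mul, smul_eq_mul, ← Complex.ofReal_mul, ← Complex.ofReal_mul,
        ← Complex.ofReal_add, Complex.ofReal_re]
      ring
    have htrN : N.trace.re = (1/4) * (sqn y1 + sqn y2) + (1 - sqn m) := by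
      rw [hN, Matrix.trace_add, Matrix.trace_add, Matrix.trace_smul, Matrix.trace_smul,
        trace_outer, trace_outer, htrS, quarter]
      rw [smul_eq_mul, smul_eq_mul, ← Complex.ofReal_mul, ← Complex.ofReal_mul,
        ← Complex.ofReal_add, ← Complex.ofReal_add, Complex.ofReal_re]
      ring
    have hainv : (a⁻¹) ^ 2 = nd⁻¹ := by rw [inv_pow, ha2]
    have h11 : sqn x1 + sqn y1 = 4 * nd := by
      rw [hx1, hy1, sqn_smul_add, hu, sqn_smul, hsqnd, hainv, ha2]
      field_simp [hndpos.ne']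
      ring
    have h22 : sqn x2 + sqn y2 ≤ 4 * nd := by
      have h : sqn x2 + sqn y2 = 2 * nd + 2 * nd * sqn m := by
        rw [hx2, hy2, sqn_smul_add, sqn_smul, hsqnd, hsqnm, hainv, ha2]
        field_simp [hndpos.ne']
      rw [h]
      nlinarith [sqn_nonneg m]
    have hvar : 1 - sqn m ≤ 2 * nd := by
      nlinarith [htri, hnm1, hnm0, hsqnm]
    have hfin : P.trace.re + N.trace.re ≤ 4 * nd := by
      rw [htrP, htrN]
      linarith [h11, h22, hvar]
    linarith [hb, hfin]

end MixAux
namespace MixAux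

lemma dot_star_self {n : Type*} [Fintype n] (z : n → ℂ) : star z ⬝ᵥ z = ((sqn z : ℝ) : ℂ) := by
  simp only [dotProduct, sqn, Pi.star_apply, Complex.star_def, Complex.ofReal_sum]
  exact Finset.sum_congr rfl fun i _ => by rw [mul_comm, Complex.mul_conj]

lemma sqn_isometry {n m : Type*} [Fintype n] [Fintype m] [DecidableEq m]
    (A : Matrix n m ℂ) (hA : Aᴴ * A = 1) (ψ : m → ℂ) : sqn (A.mulVec ψ) = sqn ψ := by
  have h : star (A *ᵥ ψ) ⬝ᵥ (A *ᵥ ψ) = star ψ ⬝ᵥ ψ := by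
    rw [Matrix.star_mulVec, Matrix.dotProduct_mulVec, Matrix.vecMul_vecMul, hA,
      Matrix.vecMul_one]
  rw [dot_star_self, dot_star_self] at h
  exact_mod_cast h

end MixAux

/-- Mixing lemma for a fixed isometry `U` and a (finitely supported) random isometry `V`:
for every unit vector `ψ`,
`(1/2)‖U|ψ⟩⟨ψ|U† − E[V|ψ⟩⟨ψ|V†]‖₁ ≤ 2‖(U − E[V])|ψ⟩‖₂`. -/
theorem stmt1 {dIn dOut K : ℕ} (U : Matrix (Fin dOut) (Fin dIn) ℂ)
    (hU : Uᴴ * U = 1)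
    (p : Fin K → ℝ) (hp : ∀ i, 0 ≤ p i) (hps : ∑ i, p i = 1)
    (V : Fin K → Matrix (Fin dOut) (Fin dIn) ℂ) (hV : ∀ i, (V i)ᴴ * V i = 1)
    (ψ : EuclideanSpace ℂ (Fin dIn)) (hψ : ‖ψ‖ = 1) :
    (1 / 2) * traceNorm (outer (U.mulVec ψ) - ∑ i, (p i : ℂ) • outer ((V i).mulVec ψ))
      ≤ 2 * ‖Matrix.toEuclideanLin (U - ∑ i, (p i : ℂ) • V i) ψ‖ := by
  have hψeq : (WithLp.equiv 2 (Fin dIn → ℂ)) ψ = ψ := rfl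
  have hψf : MixAux.sqn (ψ : Fin dIn → ℂ) = 1 := by
    have h := MixAux.norm_e ((WithLp.equiv 2 (Fin dIn → ℂ)) ψ)
    rw [Equiv.symm_apply_apply, hψ, hψeq] at h
    have := h.symm
    rwa [Real.sqrt_eq_one] at this
  have hu : MixAux.sqn (U.mulVec ψ) = 1 := by
    rw [MixAux.sqn_isometry U hU, hψf]
  have hv : ∀ i, MixAux.sqn ((V i).mulVec ψ) = 1 := fun i => by
    rw [MixAux.sqn_isometry (V i) (hV i), hψf]
  have key := MixAux.main_ineq p hp hps (U.mulVec ψ) (fun i => (V i).mulVec ψ) hu hv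
  have hMv : (∑ i, (p i : ℂ) • V i) *ᵥ (ψ : Fin dIn → ℂ)
      = ∑ i, (p i : ℂ) • ((V i) *ᵥ (ψ : Fin dIn → ℂ)) := by
    funext a
    simp only [Matrix.mulVec, dotProduct, Matrix.sum_apply, Matrix.smul_apply, smul_eq_mul,
      Finset.sum_apply, Pi.smul_apply, Finset.sum_mul, Finset.mul_sum]
    rw [Finset.sum_comm]
    exact Finset.sum_congr rfl fun i _ => Finset.sum_congr rfl fun b _ => by ring
  have hrhs : ‖Matrix.toEuclideanLin (U - ∑ i, (p i : ℂ) • V i) ψ‖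
      = Real.sqrt (MixAux.sqn (U.mulVec ψ - ∑ i, (p i : ℂ) • ((V i).mulVec ψ))) := by
    rw [Matrix.toEuclideanLin_apply, ← WithLp.equiv_symm_apply, MixAux.norm_e]
    congr 1
    rw [Matrix.sub_mulVec, hMv]
  rw [hrhs]
  linarith [key]
end

section
/- Let f : [N] → {0,1} be a Boolean function, p : [N] → [0,1] a probability distribution with p_max = max_x p(x), and let x₁,…,x_M be i.i.d. samples from p. Define the random unitary V = Π_{i=1}^M exp(i·t·f(x_i)/M · |x_i⟩⟨x_i|) and the target unitary U = Σ_x e^{i·p(x)·f(x)·t}|x⟩⟨x|. Then ‖U − E[V]‖ ≤ (t²·p_max)/(2M) in operator norm; in particular M ≥ 2·p_max·t²/ε samples guarantee ‖U − E[V]‖ ≤ ε/4. -/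
set_option maxHeartbeats 1000000


open Matrix

/-- Operator norm (ℓ²→ℓ² norm) of a complex matrix. -/
noncomputable def opNorm {m n : Type*} [Fintype m] [Fintype n] [DecidableEq n]
    (A : Matrix m n ℂ) : ℝ :=
  ‖LinearMap.toContinuousLinearMap (Matrix.toEuclideanLin A)‖

/-- The target unitary `U = Σ_x e^{i·p(x)·f(x)·t}|x⟩⟨x|`. -/
noncomputable def Umat {N : ℕ} (t : ℝ) (f p : Fin N → ℝ) : Matrix (Fin N) (Fin N) ℂ :=
  Matrix.diagonal fun x => Complex.exp (Complex.I * Complex.ofReal (p x * f x * t))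

/-- The random unitary resulting from the sample sequence `xs`:
`V(xs) = Π_i exp(i·t·f(x_i)/M·|x_i⟩⟨x_i|) = Σ_y e^{i·t·f(y)·m_y}|y⟩⟨y|`,
where `m_y` is the empirical frequency of `y` among the samples. -/
noncomputable def Vmat {N M : ℕ} (t : ℝ) (f : Fin N → ℝ) (xs : Fin M → Fin N) :
    Matrix (Fin N) (Fin N) ℂ :=
  Matrix.diagonal fun y => Complex.exp (Complex.I * Complex.ofReal
    (t * f y * (((Finset.univ.filter fun i => xs i = y).card : ℝ) / M)))

lemma normA (x : ℝ) : ‖Complex.exp (Complex.I * x) - 1 - Complex.I * x‖ ≤ x ^ 2 / 2 := by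
  have hmono : ∀ y : ℝ, 0 ≤ y →
      2 - 2 * Real.cos y - 2 * y * Real.sin y + y ^ 2 ≤ y ^ 4 / 4 := by
    intro y hy
    set F : ℝ → ℝ := fun z => z ^ 4 / 4 - z ^ 2 - 2 + 2 * Real.cos z + 2 * (z * Real.sin z)
      with hF
    have hd : ∀ z : ℝ, HasDerivAt F (z ^ 3 - 2 * z + 2 * (z * Real.cos z)) z := by
      intro z
      have h1 : HasDerivAt (fun z : ℝ => z ^ 4 / 4) (z ^ 3) z := by
        simpa using ((hasDerivAt_pow 4 z).div_const 4)
      have h2 : HasDerivAt (fun z : ℝ => z ^ 2) (2 * z) z := by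
        simpa using hasDerivAt_pow 2 z
      have h3 : HasDerivAt (fun z : ℝ => 2 * Real.cos z) (2 * (-Real.sin z)) z :=
        (Real.hasDerivAt_cos z).const_mul 2
      have h4 : HasDerivAt (fun z : ℝ => z * Real.sin z) (1 * Real.sin z + z * Real.cos z) z :=
        (hasDerivAt_id z).mul (Real.hasDerivAt_sin z)
      have := (((h1.sub h2).sub_const 2).add h3).add (h4.const_mul 2)
      exact this.congr_deriv (by ring)
    have hmono : MonotoneOn F (Set.Ici (0:ℝ)) := by
      apply monotoneOn_of_deriv_nonneg (convex_Ici 0)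
      · exact (Continuous.continuousOn (by fun_prop))
      · intro z _
        exact (hd z).differentiableAt.differentiableWithinAt
      · intro z hz
        rw [(hd z).deriv]
        simp only [Set.mem_Ioi, interior_Ici] at hz
        have hc : 1 - z ^ 2 / 2 ≤ Real.cos z := Real.one_sub_sq_div_two_le_cos
        nlinarith [hz.le]
    have h0 : F 0 = 0 := by simp [hF]
    have := hmono (Set.self_mem_Ici) (Set.mem_Ici.mpr hy) hy
    rw [h0] at this
    simp only [hF] at this
    nlinarith [this]
  have hsq : ‖Complex.exp (Complex.I * x) - 1 - Complex.I * x‖ ^ 2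
      = 2 - 2 * Real.cos x - 2 * x * Real.sin x + x ^ 2 := by
    have : Complex.exp (Complex.I * x) - 1 - Complex.I * x
        = Complex.ofReal (Real.cos x - 1) + Complex.ofReal (Real.sin x - x) * Complex.I := by
      rw [mul_comm Complex.I (x:ℂ), Complex.exp_mul_I]
      push_cast [Complex.ofReal_cos, Complex.ofReal_sin]
      ring
    rw [this, Complex.sq_norm, Complex.normSq_add_mul_I]
    nlinarith [Real.sin_sq_add_cos_sq x]
  have h2 := hmono |x| (abs_nonneg x)
  have heq : 2 - 2 * Real.cos |x| - 2 * |x| * Real.sin |x| + |x| ^ 2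
      = 2 - 2 * Real.cos x - 2 * x * Real.sin x + x ^ 2 := by
    rcases abs_cases x with ⟨h, _⟩ | ⟨h, _⟩ <;> rw [h] <;> simp [Real.cos_neg, Real.sin_neg] <;> ring
  rw [heq] at h2
  have h3 : |x| ^ 4 = (x ^ 2) ^ 2 := by
    rcases abs_cases x with ⟨h, _⟩ | ⟨h, _⟩ <;> rw [h] <;> ring
  rw [h3] at h2
  have hnn : (0:ℝ) ≤ x ^ 2 / 2 := by positivity
  nlinarith [norm_nonneg (Complex.exp (Complex.I * x) - 1 - Complex.I * x), hsq]

lemma sumProd {N M : ℕ} (g : Fin M → Fin N → ℝ) :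
    ∑ xs : Fin M → Fin N, ∏ i, g i (xs i) = ∏ i, ∑ x, g i x := by
  rw [Finset.prod_univ_sum, Fintype.piFinset_univ]

lemma S0 {N M : ℕ} (p : Fin N → ℝ) (hps : ∑ x, p x = 1) :
    ∑ xs : Fin M → Fin N, ∏ i, p (xs i) = 1 := by
  calc ∑ xs : Fin M → Fin N, ∏ i, p (xs i)
      = ∑ xs : Fin M → Fin N, ∏ i, (fun (_ : Fin M) x => p x) i (xs i) := rfl
    _ = ∏ _i : Fin M, ∑ x, p x := sumProd _
    _ = 1 := by simp [hps]

lemma indSum {N M : ℕ} (p : Fin N → ℝ) (y : Fin N) (hps : ∑ x, p x = 1) (i : Fin M) :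
    ∑ xs : Fin M → Fin N, (∏ j, p (xs j)) * (if xs i = y then (1:ℝ) else 0) = p y := by
  have hrw : ∀ xs : Fin M → Fin N, (∏ j, p (xs j)) * (if xs i = y then (1:ℝ) else 0)
      = ∏ j, (fun (j' : Fin M) x => p x * (if j' = i then (if x = y then (1:ℝ) else 0) else 1))
          j (xs j) := by
    intro xs
    simp only
    rw [Finset.prod_mul_distrib, Finset.prod_ite_eq' Finset.univ i
      (fun j => if xs j = y then (1:ℝ) else 0)]
    simp
  have hfac : ∀ j : Fin M,
      (∑ x, p x * (if j = i then (if x = y then (1:ℝ) else 0) else 1)) =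
        if j = i then p y else 1 := by
    intro j
    by_cases h : j = i <;> simp [h, hps, mul_ite, mul_one, mul_zero, Finset.sum_ite_eq']
  calc ∑ xs : Fin M → Fin N, (∏ j, p (xs j)) * (if xs i = y then (1:ℝ) else 0)
      = ∑ xs : Fin M → Fin N, ∏ j,
          (fun (j' : Fin M) x => p x * (if j' = i then (if x = y then (1:ℝ) else 0) else 1))
            j (xs j) := Finset.sum_congr rfl fun xs _ => hrw xs
    _ = ∏ j : Fin M, ∑ x, p x * (if j = i then (if x = y then (1:ℝ) else 0) else 1) :=
        sumProd (fun (j' : Fin M) x => p x * (if j' = i then (if x = y then (1:ℝ) else 0) else 1))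
    _ = ∏ j : Fin M, if j = i then p y else 1 := Finset.prod_congr rfl fun j _ => hfac j
    _ = p y := by rw [Finset.prod_ite_eq' Finset.univ i fun _ => p y]; simp

lemma indSum2 {N M : ℕ} (p : Fin N → ℝ) (y : Fin N) (hps : ∑ x, p x = 1)
    (i k : Fin M) (hik : i ≠ k) :
    ∑ xs : Fin M → Fin N, (∏ j, p (xs j)) * (if xs i = y then (1:ℝ) else 0)
      * (if xs k = y then (1:ℝ) else 0) = p y ^ 2 := by
  have hrw : ∀ xs : Fin M → Fin N, (∏ j, p (xs j)) * (if xs i = y then (1:ℝ) else 0)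
        * (if xs k = y then (1:ℝ) else 0)
      = ∏ j, (fun (j' : Fin M) x => p x * (if j' = i then (if x = y then (1:ℝ) else 0) else 1)
          * (if j' = k then (if x = y then (1:ℝ) else 0) else 1)) j (xs j) := by
    intro xs
    simp only
    rw [Finset.prod_mul_distrib, Finset.prod_mul_distrib,
      Finset.prod_ite_eq' Finset.univ i (fun j => if xs j = y then (1:ℝ) else 0),
      Finset.prod_ite_eq' Finset.univ k (fun j => if xs j = y then (1:ℝ) else 0)]
    simp
  have hfac : ∀ j : Fin M,
      (∑ x, p x * (if j = i then (if x = y then (1:ℝ) else 0) else 1)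
        * (if j = k then (if x = y then (1:ℝ) else 0) else 1)) =
        (if j = i then p y else 1) * (if j = k then p y else 1) := by
    intro j
    by_cases h1 : j = i
    · have h2 : ¬ (j = k) := by rw [h1]; exact hik
      simp [h1, h2, hik, Ne.symm hik, mul_ite, mul_one, mul_zero, Finset.sum_ite_eq']
    · by_cases h2 : j = k <;>
        simp [h1, h2, hik, Ne.symm hik, hps, mul_ite, mul_one, mul_zero, Finset.sum_ite_eq']
  calc ∑ xs : Fin M → Fin N, (∏ j, p (xs j)) * (if xs i = y then (1:ℝ) else 0)
        * (if xs k = y then (1:ℝ) else 0)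
      = ∑ xs : Fin M → Fin N, ∏ j,
          (fun (j' : Fin M) x => p x * (if j' = i then (if x = y then (1:ℝ) else 0) else 1)
            * (if j' = k then (if x = y then (1:ℝ) else 0) else 1)) j (xs j) :=
        Finset.sum_congr rfl fun xs _ => hrw xs
    _ = ∏ j : Fin M, ∑ x, p x * (if j = i then (if x = y then (1:ℝ) else 0) else 1)
          * (if j = k then (if x = y then (1:ℝ) else 0) else 1) :=
        sumProd (fun (j' : Fin M) x => p x * (if j' = i then (if x = y then (1:ℝ) else 0) else 1)
          * (if j' = k then (if x = y then (1:ℝ) else 0) else 1))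
    _ = ∏ j : Fin M, (if j = i then p y else 1) * (if j = k then p y else 1) :=
        Finset.prod_congr rfl fun j _ => hfac j
    _ = p y ^ 2 := by
        rw [Finset.prod_mul_distrib, Finset.prod_ite_eq' Finset.univ i fun _ => p y,
          Finset.prod_ite_eq' Finset.univ k fun _ => p y]
        simp; ring

lemma cardEq {N M : ℕ} (y : Fin N) (xs : Fin M → Fin N) :
    (((Finset.univ.filter fun i => xs i = y).card : ℝ)) = ∑ i, (if xs i = y then (1:ℝ) else 0) := by
  rw [Finset.card_filter]
  push_cast
  rfl

lemma S1 {N M : ℕ} (p : Fin N → ℝ) (y : Fin N) (hps : ∑ x, p x = 1) :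
    ∑ xs : Fin M → Fin N, (∏ i, p (xs i))
      * ((Finset.univ.filter fun i => xs i = y).card : ℝ) = M * p y := by
  calc ∑ xs : Fin M → Fin N, (∏ i, p (xs i)) * ((Finset.univ.filter fun i => xs i = y).card : ℝ)
      = ∑ xs : Fin M → Fin N, ∑ i, (∏ j, p (xs j)) * (if xs i = y then (1:ℝ) else 0) := by
        refine Finset.sum_congr rfl fun xs _ => ?_
        rw [cardEq y xs, Finset.mul_sum]
    _ = ∑ i : Fin M, ∑ xs : Fin M → Fin N, (∏ j, p (xs j)) * (if xs i = y then (1:ℝ) else 0) :=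
        Finset.sum_comm
    _ = ∑ _i : Fin M, p y := Finset.sum_congr rfl fun i _ => indSum p y hps i
    _ = M * p y := by simp [mul_comm]

lemma S2 {N M : ℕ} (p : Fin N → ℝ) (y : Fin N) (hps : ∑ x, p x = 1) :
    ∑ xs : Fin M → Fin N, (∏ i, p (xs i))
      * ((Finset.univ.filter fun i => xs i = y).card : ℝ) ^ 2
    = M * p y + ((M:ℝ) ^ 2 - M) * p y ^ 2 := by
  have step : ∀ xs : Fin M → Fin N, (∏ i, p (xs i))
        * ((Finset.univ.filter fun i => xs i = y).card : ℝ) ^ 2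
      = ∑ i, ∑ k, (∏ j, p (xs j)) * (if xs i = y then (1:ℝ) else 0)
          * (if xs k = y then (1:ℝ) else 0) := by
    intro xs
    rw [cardEq y xs, sq, Finset.sum_mul_sum, Finset.mul_sum]
    refine Finset.sum_congr rfl fun i _ => ?_
    rw [Finset.mul_sum]
    refine Finset.sum_congr rfl fun k _ => ?_
    ring
  rw [Finset.sum_congr rfl fun xs _ => step xs, Finset.sum_comm]
  have inner : ∀ i : Fin M, ∑ xs : Fin M → Fin N, ∑ k, (∏ j, p (xs j))
        * (if xs i = y then (1:ℝ) else 0) * (if xs k = y then (1:ℝ) else 0)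
      = p y + ((M:ℝ) - 1) * p y ^ 2 := by
    intro i
    rw [Finset.sum_comm]
    have hk : ∀ k : Fin M, ∑ xs : Fin M → Fin N, (∏ j, p (xs j))
          * (if xs i = y then (1:ℝ) else 0) * (if xs k = y then (1:ℝ) else 0)
        = if k = i then p y else p y ^ 2 := by
      intro k
      by_cases h : k = i
      · subst h
        have heq : ∀ xs : Fin M → Fin N, (∏ j, p (xs j)) * (if xs k = y then (1:ℝ) else 0)
            * (if xs k = y then (1:ℝ) else 0)
            = (∏ j, p (xs j)) * (if xs k = y then (1:ℝ) else 0) := by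
          intro xs; by_cases hx : xs k = y <;> simp [hx]
        rw [Finset.sum_congr rfl fun xs _ => heq xs, indSum p y hps k]
        simp
      · rw [indSum2 p y hps i k (fun hh => h hh.symm)]
        simp [h]
    rw [Finset.sum_congr rfl fun k _ => hk k]
    have hsplit : ∀ k : Fin M, (if k = i then p y else p y ^ 2)
        = p y ^ 2 + (if k = i then p y - p y ^ 2 else 0) := by
      intro k; by_cases h : k = i <;> simp [h]
    rw [Finset.sum_congr rfl fun k _ => hsplit k, Finset.sum_add_distrib,
      Finset.sum_ite_eq' Finset.univ i fun _ => p y - p y ^ 2]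
    simp
    ring
  rw [Finset.sum_congr rfl fun i _ => inner i]
  simp
  ring

lemma opNorm_diagonal_le {N : ℕ} (d : Fin N → ℂ) (C : ℝ) (hC : 0 ≤ C)
    (h : ∀ y, ‖d y‖ ≤ C) : opNorm (Matrix.diagonal d) ≤ C := by
  unfold opNorm
  apply ContinuousLinearMap.opNorm_le_bound _ hC
  intro v
  rw [LinearMap.coe_toContinuousLinearMap']
  rw [EuclideanSpace.norm_eq, EuclideanSpace.norm_eq]
  rw [show ((Matrix.toEuclideanLin (Matrix.diagonal d)) v : EuclideanSpace ℂ (Fin N))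
      = (WithLp.equiv 2 (Fin N → ℂ)).symm ((Matrix.diagonal d) *ᵥ (WithLp.equiv 2 _ v)) from rfl]
  rw [← Real.sqrt_sq hC, ← Real.sqrt_mul (by positivity)]
  apply Real.sqrt_le_sqrt
  rw [Finset.mul_sum]
  apply Finset.sum_le_sum
  intro y _
  simp only [WithLp.equiv_symm_apply, PiLp.toLp_apply, Matrix.mulVec_diagonal]
  rw [norm_mul, mul_pow]
  have := h y
  have h1 : (0:ℝ) ≤ ‖(WithLp.equiv 2 (Fin N → ℂ)) v y‖ := norm_nonneg _
  have h2 : ‖v y‖ = ‖(WithLp.equiv 2 (Fin N → ℂ)) v y‖ := rfl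
  rw [← h2]
  have h3 : ‖d y‖ ^ 2 ≤ C ^ 2 := by nlinarith [norm_nonneg (d y)]
  nlinarith [sq_nonneg ‖v y‖, norm_nonneg (v y)]

lemma entryBound {N M : ℕ} (hM : 0 < M) (t : ℝ) (p : Fin N → ℝ) (hp : ∀ x, 0 ≤ p x)
    (hps : ∑ x, p x = 1) (y : Fin N) :
    ‖Complex.exp (Complex.I * Complex.ofReal (p y * t))
      - ∑ xs : Fin M → Fin N, (Complex.ofReal (∏ i, p (xs i))) *
          Complex.exp (Complex.I * Complex.ofReal
            (t * (((Finset.univ.filter fun i => xs i = y).card : ℝ) / M)))‖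
      ≤ t ^ 2 * (p y * (1 - p y)) / (2 * M) := by
  have hMR : (0:ℝ) < M := by exact_mod_cast hM
  set μ : ℝ := p y * t with hμ
  let w : (Fin M → Fin N) → ℝ := fun xs => ∏ i, p (xs i)
  let c : (Fin M → Fin N) → ℝ := fun xs => ((Finset.univ.filter fun i => xs i = y).card : ℝ)
  let X : (Fin M → Fin N) → ℝ := fun xs => t * (c xs / M)
  have hw0 : ∀ xs, 0 ≤ w xs := fun xs => Finset.prod_nonneg fun i _ => hp _
  have hs0 : ∑ xs, w xs = 1 := S0 p hps
  have hs1 : ∑ xs, w xs * c xs = M * p y := S1 p y hps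
  have hs2 : ∑ xs, w xs * c xs ^ 2 = M * p y + ((M:ℝ) ^ 2 - M) * p y ^ 2 := S2 p y hps
  have hYsum : ∑ xs, w xs * (X xs - μ) = 0 := by
    have hterm : ∀ xs : Fin M → Fin N, w xs * (X xs - μ)
        = (t / M) * (w xs * c xs) - μ * w xs := by
      intro xs
      show w xs * (t * (c xs / M) - μ) = _
      field_simp
    rw [Finset.sum_congr rfl fun xs _ => hterm xs, Finset.sum_sub_distrib,
      ← Finset.mul_sum, ← Finset.mul_sum, hs1, hs0]
    field_simp
    ring
  have hY2sum : ∑ xs, w xs * (X xs - μ) ^ 2 = t ^ 2 * (p y * (1 - p y)) / M := by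
    have hterm : ∀ xs : Fin M → Fin N, w xs * (X xs - μ) ^ 2
        = (t / M) ^ 2 * (w xs * c xs ^ 2) - (2 * (t / M) * μ) * (w xs * c xs)
          + μ ^ 2 * w xs := by
      intro xs
      show w xs * (t * (c xs / M) - μ) ^ 2 = _
      field_simp
      ring
    rw [Finset.sum_congr rfl fun xs _ => hterm xs, Finset.sum_add_distrib,
      Finset.sum_sub_distrib, ← Finset.mul_sum, ← Finset.mul_sum, ← Finset.mul_sum,
      hs1, hs2, hs0]
    field_simp
    ring
  have hS0c : ∑ xs : Fin M → Fin N, (Complex.ofReal (w xs)) = 1 := by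
    have := congrArg Complex.ofReal hs0
    push_cast at this
    exact this
  have hS1c : ∑ xs : Fin M → Fin N, (Complex.ofReal (w xs)) * (Complex.ofReal (X xs - μ)) = 0 := by
    calc ∑ xs : Fin M → Fin N, (Complex.ofReal (w xs)) * (Complex.ofReal (X xs - μ))
        = ∑ xs : Fin M → Fin N, (Complex.ofReal (w xs * (X xs - μ))) :=
          Finset.sum_congr rfl fun xs _ => by push_cast; ring
      _ = Complex.ofReal (∑ xs : Fin M → Fin N, w xs * (X xs - μ)) :=
          (Complex.ofReal_sum _ _).symm
      _ = 0 := by rw [hYsum]; simp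
  have hXc : ∀ xs : Fin M → Fin N, Complex.exp (Complex.I * Complex.ofReal (X xs))
      = Complex.exp (Complex.I * Complex.ofReal μ)
        * Complex.exp (Complex.I * Complex.ofReal (X xs - μ)) := by
    intro xs
    rw [← Complex.exp_add]
    congr 1
    push_cast
    ring
  have key : Complex.exp (Complex.I * Complex.ofReal μ)
        - ∑ xs : Fin M → Fin N, (Complex.ofReal (w xs)) * Complex.exp (Complex.I * Complex.ofReal (X xs))
      = ∑ xs : Fin M → Fin N, (Complex.ofReal (w xs)) * Complex.exp (Complex.I * Complex.ofReal μ)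
          * (1 + Complex.I * Complex.ofReal (X xs - μ)
            - Complex.exp (Complex.I * Complex.ofReal (X xs - μ))) := by
    have expand : ∀ xs : Fin M → Fin N, (Complex.ofReal (w xs)) * Complex.exp (Complex.I * Complex.ofReal μ)
          * (1 + Complex.I * Complex.ofReal (X xs - μ)
            - Complex.exp (Complex.I * Complex.ofReal (X xs - μ)))
        = (Complex.ofReal (w xs)) * Complex.exp (Complex.I * Complex.ofReal μ)
          + (Complex.exp (Complex.I * Complex.ofReal μ) * Complex.I)
            * ((Complex.ofReal (w xs)) * (Complex.ofReal (X xs - μ)))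
          - (Complex.ofReal (w xs)) * Complex.exp (Complex.I * Complex.ofReal (X xs)) := by
      intro xs
      rw [hXc xs]
      ring
    rw [Finset.sum_congr rfl fun xs _ => expand xs, Finset.sum_sub_distrib,
      Finset.sum_add_distrib, ← Finset.sum_mul, ← Finset.mul_sum, hS1c, hS0c]
    ring
  have hterm_bound : ∀ xs : Fin M → Fin N,
      ‖(Complex.ofReal (w xs)) * Complex.exp (Complex.I * Complex.ofReal μ)
          * (1 + Complex.I * Complex.ofReal (X xs - μ)
            - Complex.exp (Complex.I * Complex.ofReal (X xs - μ)))‖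
        ≤ w xs * ((X xs - μ) ^ 2 / 2) := by
    intro xs
    rw [norm_mul, norm_mul]
    have h1 : ‖(Complex.ofReal (w xs))‖ = w xs := by
      rw [Complex.norm_real]
      exact abs_of_nonneg (hw0 xs)
    have h2 : ‖Complex.exp (Complex.I * Complex.ofReal μ)‖ = 1 := by
      rw [Complex.norm_exp]
      simp
    have h3 : ‖1 + Complex.I * Complex.ofReal (X xs - μ)
        - Complex.exp (Complex.I * Complex.ofReal (X xs - μ))‖ ≤ (X xs - μ) ^ 2 / 2 := by
      rw [show (1 + Complex.I * Complex.ofReal (X xs - μ)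
          - Complex.exp (Complex.I * Complex.ofReal (X xs - μ)))
        = -(Complex.exp (Complex.I * Complex.ofReal (X xs - μ)) - 1
          - Complex.I * Complex.ofReal (X xs - μ)) by ring, norm_neg]
      exact normA (X xs - μ)
    rw [h1, h2, mul_one]
    exact mul_le_mul_of_nonneg_left h3 (hw0 xs)
  calc ‖Complex.exp (Complex.I * Complex.ofReal (p y * t))
      - ∑ xs : Fin M → Fin N, (Complex.ofReal (∏ i, p (xs i))) *
          Complex.exp (Complex.I * Complex.ofReal
            (t * (((Finset.univ.filter fun i => xs i = y).card : ℝ) / M)))‖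
      = ‖∑ xs : Fin M → Fin N, (Complex.ofReal (w xs)) * Complex.exp (Complex.I * Complex.ofReal μ)
          * (1 + Complex.I * Complex.ofReal (X xs - μ)
            - Complex.exp (Complex.I * Complex.ofReal (X xs - μ)))‖ := by rw [← key]
    _ ≤ ∑ xs : Fin M → Fin N, ‖(Complex.ofReal (w xs)) * Complex.exp (Complex.I * Complex.ofReal μ)
          * (1 + Complex.I * Complex.ofReal (X xs - μ)
            - Complex.exp (Complex.I * Complex.ofReal (X xs - μ)))‖ := norm_sum_le _ _
    _ ≤ ∑ xs : Fin M → Fin N, w xs * ((X xs - μ) ^ 2 / 2) :=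
        Finset.sum_le_sum fun xs _ => hterm_bound xs
    _ = (∑ xs : Fin M → Fin N, w xs * (X xs - μ) ^ 2) / 2 := by
        rw [Finset.sum_div]
        exact Finset.sum_congr rfl fun xs _ => (mul_div_assoc _ _ _).symm
    _ = t ^ 2 * (p y * (1 - p y)) / (2 * M) := by
        rw [hY2sum]
        ring


/-- Quantum oracle sketching for i.i.d. data: `‖U − E[V]‖ ≤ t²·p_max/(2M)`; in particular,
`M ≥ 2·p_max·t²/ε` samples guarantee `‖U − E[V]‖ ≤ ε/4`. -/
theorem stmt4 {N M : ℕ} (hN : 0 < N) (hM : 0 < M) (t : ℝ) (ht : 0 < t)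
    (f : Fin N → ℝ) (hf : ∀ x, f x = 0 ∨ f x = 1)
    (p : Fin N → ℝ) (hp : ∀ x, 0 ≤ p x) (hps : ∑ x, p x = 1) :
    opNorm (Umat t f p
        - ∑ xs : Fin M → Fin N, (Complex.ofReal (∏ i, p (xs i))) • Vmat t f xs)
      ≤ t ^ 2 * (⨆ x, p x) / (2 * M) ∧
    ∀ ε : ℝ, 0 < ε → 2 * (⨆ x, p x) * t ^ 2 / ε ≤ M →
      opNorm (Umat t f p
          - ∑ xs : Fin M → Fin N, (Complex.ofReal (∏ i, p (xs i))) • Vmat t f xs)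
        ≤ ε / 4 := by
  have hMR : (0:ℝ) < M := by exact_mod_cast hM
  set pmax : ℝ := ⨆ x, p x with hpmax
  have hbdd : BddAbove (Set.range p) := (Set.finite_range p).bddAbove
  have hle : ∀ x, p x ≤ pmax := fun x => le_ciSup hbdd x
  have hpm0 : 0 ≤ pmax := le_trans (hp ⟨0, hN⟩) (hle ⟨0, hN⟩)
  have hq1 : ∀ x : Fin N, p x * (1 - p x) ≤ pmax := by
    intro x
    nlinarith [hp x, hle x, sq_nonneg (p x)]
  have hCpos : 0 ≤ t ^ 2 * pmax / (2 * (M:ℝ)) :=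
    div_nonneg (mul_nonneg (sq_nonneg t) hpm0) (by positivity)
  have hmat : Umat t f p - (∑ xs : Fin M → Fin N, (Complex.ofReal (∏ i, p (xs i))) • Vmat t f xs)
      = Matrix.diagonal (fun y => Complex.exp (Complex.I * Complex.ofReal (p y * f y * t))
          - ∑ xs : Fin M → Fin N, (Complex.ofReal (∏ i, p (xs i))) *
              Complex.exp (Complex.I * Complex.ofReal
                (t * f y * (((Finset.univ.filter fun i => xs i = y).card : ℝ) / M)))) := by
    unfold Umat Vmat
    ext i j
    by_cases h : i = j
    · subst h
      simp [Matrix.sub_apply, Matrix.sum_apply, Matrix.smul_apply, Matrix.diagonal_apply_eq,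
        smul_eq_mul]
    · simp [Matrix.sub_apply, Matrix.sum_apply, Matrix.smul_apply, Matrix.diagonal_apply_ne _ h]
  have hbound : opNorm (Umat t f p
        - ∑ xs : Fin M → Fin N, (Complex.ofReal (∏ i, p (xs i))) • Vmat t f xs)
      ≤ t ^ 2 * pmax / (2 * M) := by
    rw [hmat]
    apply opNorm_diagonal_le _ _ hCpos
    intro y
    rcases hf y with hfy | hfy
    · have hs0c : ∑ xs : Fin M → Fin N, (Complex.ofReal (∏ i, p (xs i))) = 1 := by
        rw [← Complex.ofReal_sum, S0 p hps]
        simp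
      simp only [hfy, mul_zero, zero_mul, Complex.ofReal_zero, Complex.exp_zero, mul_one, hs0c]
      simpa using hCpos
    · simp only [hfy, mul_one]
      exact le_trans (entryBound hM t p hp hps y)
        (by gcongr t ^ 2 * ?_ / (2 * (M:ℝ)); exact hq1 y)
  refine ⟨hbound, fun ε hε hMε => le_trans hbound ?_⟩
  have h2 : 2 * pmax * t ^ 2 ≤ M * ε := by
    rw [div_le_iff₀ hε] at hMε
    linarith
  rw [div_le_div_iff₀ (by positivity) (by norm_num : (0:ℝ) < 4)]
  nlinarith
end

section
/- Let ε > 0 and let Z be a random variable on {0,1}^m. Suppose that for every non-empty set S ⊆ [m], |Pr[⊕_{i∈S} Z_i = 0] − Pr[⊕_{i∈S} Z_i = 1]| ≤ ε·(2m)^{−|S|}. Then for every z ∈ {0,1}^m, (1−ε)·2^{−m} ≤ Pr[Z = z] ≤ (1+ε)·2^{−m}. -/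
/-- The probability, under the law `μ` of a random bitstring `Z ∈ {0,1}^m`, that the XOR of
the bits indexed by `S` equals `b`. -/
noncomputable def prParity {m : ℕ} (μ : (Fin m → Bool) → ℝ) (S : Finset (Fin m))
    (b : ZMod 2) : ℝ :=
  ∑ z : Fin m → Bool, if (∑ i ∈ S, if z i then (1 : ZMod 2) else 0) = b then μ z else 0

noncomputable def chi7 {m : ℕ} (S : Finset (Fin m)) (z : Fin m → Bool) : ℝ :=
  ∏ i ∈ S, (if z i then (-1 : ℝ) else 1)

lemma chi7_eq {m : ℕ} (S : Finset (Fin m)) (z : Fin m → Bool) :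
    chi7 S z = if (∑ i ∈ S, if z i then (1 : ZMod 2) else 0) = 0 then 1 else -1 := by
  classical
  induction S using Finset.induction_on with
  | empty => simp [chi7]
  | insert a s h ih =>
    rw [chi7, Finset.prod_insert h, Finset.sum_insert h, ← chi7]
    have h2 : ∀ x : ZMod 2, x = 0 ∨ x = 1 := by decide
    rcases h2 (∑ i ∈ s, if z i then (1:ZMod 2) else 0) with hs | hs <;>
      cases hz : z a <;> simp [hz, hs, ih, show ((1:ZMod 2)+1=0) from by decide, show ((1:ZMod 2)≠0) from by decide]

lemma abs_chi7 {m : ℕ} (S : Finset (Fin m)) (z : Fin m → Bool) : |chi7 S z| = 1 := by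
  rw [chi7_eq]; split <;> simp

lemma dS_eq {m : ℕ} (μ : (Fin m → Bool) → ℝ) (S : Finset (Fin m)) :
    prParity μ S 0 - prParity μ S 1 = ∑ z, chi7 S z * μ z := by
  rw [prParity, prParity, ← Finset.sum_sub_distrib]
  refine Finset.sum_congr rfl fun z _ => ?_
  rw [chi7_eq]
  have h2 : ∀ x : ZMod 2, x = 0 ∨ x = 1 := by decide
  rcases h2 (∑ i ∈ S, if z i then (1:ZMod 2) else 0) with hs | hs <;>
    simp [hs, show ((1:ZMod 2)≠0) from by decide, show ((0:ZMod 2)≠1) from by decide]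

lemma orth7 {m : ℕ} (z w : Fin m → Bool) :
    ∑ S : Finset (Fin m), chi7 S z * chi7 S w = if z = w then (2:ℝ)^m else 0 := by
  classical
  have h1 : ∀ S : Finset (Fin m), chi7 S z * chi7 S w
      = ∏ i ∈ S, ((if z i then (-1:ℝ) else 1) * (if w i then (-1:ℝ) else 1)) := by
    intro S; rw [chi7, chi7, Finset.prod_mul_distrib]
  simp only [h1]
  have h2 : ∏ i : Fin m, (((if z i then (-1:ℝ) else 1) * (if w i then (-1:ℝ) else 1)) + 1)
      = ∑ S : Finset (Fin m), ∏ i ∈ S, ((if z i then (-1:ℝ) else 1) * (if w i then (-1:ℝ) else 1)) := by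
    rw [Finset.prod_add]
    simp [Finset.powerset_univ]
  rw [← h2]
  by_cases hzw : z = w
  · subst hzw
    simp only [if_pos rfl]
    have : ∀ i : Fin m, ((if z i then (-1:ℝ) else 1) * (if z i then (-1:ℝ) else 1)) + 1 = 2 := by
      intro i; cases z i <;> norm_num
    rw [Finset.prod_congr rfl fun i _ => this i]
    simp
  · rw [if_neg hzw]
    obtain ⟨i, hi⟩ : ∃ i, z i ≠ w i := by
      by_contra hc; push_neg at hc; exact hzw (funext hc)
    apply Finset.prod_eq_zero (Finset.mem_univ i)
    cases hz : z i <;> cases hw : w i <;> simp [hz, hw] at hi ⊢ <;> norm_num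

lemma exp_half_le_two : Real.exp (1/2) ≤ 2 := by
  have h : Real.exp (1/2) * Real.exp (1/2) = Real.exp 1 := by
    rw [← Real.exp_add]; norm_num
  nlinarith [Real.exp_one_lt_d9, Real.exp_pos (1/2)]

lemma sum_pow_card {m : ℕ} (x : ℝ) :
    ∑ S : Finset (Fin m), x ^ S.card = (1 + x) ^ m := by
  classical
  have := Finset.prod_add (fun _ : Fin m => x) (fun _ : Fin m => (1:ℝ)) Finset.univ
  simp only [Finset.prod_const, Finset.prod_const_one, one_pow, mul_one, Finset.powerset_univ,
    Finset.card_univ, Fintype.card_fin] at this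
  rw [add_comm x 1] at this
  rw [this]

lemma comb_bound (m : ℕ) : ∑ S ∈ (Finset.univ : Finset (Finset (Fin m))).erase ∅,
    ((1:ℝ) / (2 * m)) ^ S.card ≤ 1 := by
  classical
  have hkey : ∑ S ∈ (Finset.univ : Finset (Finset (Fin m))).erase ∅,
      ((1:ℝ) / (2 * m)) ^ S.card = (1 + 1/(2*m)) ^ m - 1 := by
    have h := Finset.sum_erase_add (Finset.univ : Finset (Finset (Fin m)))
      (fun S => ((1:ℝ)/(2*m)) ^ S.card) (Finset.mem_univ ∅)
    rw [sum_pow_card] at h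
    simp only [Finset.card_empty, pow_zero] at h
    linarith
  rw [hkey]
  rcases Nat.eq_zero_or_pos m with hm | hm
  · subst hm; norm_num
  · have hx : (0:ℝ) < 2 * m := by positivity
    have h1 : (1 + 1/(2*(m:ℝ))) ≤ Real.exp (1/(2*m)) := by
      have := Real.add_one_le_exp (1/(2*(m:ℝ)))
      linarith
    have h2 : (1 + 1/(2*(m:ℝ)))^m ≤ Real.exp (1/(2*m)) ^ m := by
      apply pow_le_pow_left₀ (by positivity) h1
    have h3 : Real.exp (1/(2*(m:ℝ))) ^ m = Real.exp (1/2) := by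
      rw [← Real.exp_nat_mul]
      congr 1
      field_simp
    have := exp_half_le_two
    rw [h3] at h2
    linarith

/-- Variant of Vazirani's XOR lemma: if every nonempty parity of `Z` has bias at most
`ε·(2m)^{−|S|}`, then the law of `Z` is pointwise within a `(1±ε)` factor of uniform. -/
theorem stmt7 {m : ℕ} (ε : ℝ) (hε : 0 < ε) (μ : (Fin m → Bool) → ℝ)
    (hμ0 : ∀ z, 0 ≤ μ z) (hμ1 : ∑ z, μ z = 1)
    (hbias : ∀ S : Finset (Fin m), S.Nonempty →
      |prParity μ S 0 - prParity μ S 1| ≤ ε / (2 * (m : ℝ)) ^ S.card) :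
    ∀ z, (1 - ε) * (1 / 2 ^ m) ≤ μ z ∧ μ z ≤ (1 + ε) * (1 / 2 ^ m) := by
  classical
  intro z
  set d : Finset (Fin m) → ℝ := fun S => ∑ w, chi7 S w * μ w with hd
  -- Fourier inversion
  have hinv : (2:ℝ)^m * μ z = ∑ S : Finset (Fin m), chi7 S z * d S := by
    symm
    calc ∑ S : Finset (Fin m), chi7 S z * d S
        = ∑ S : Finset (Fin m), ∑ w, chi7 S z * chi7 S w * μ w := by
          simp only [hd, Finset.mul_sum, mul_assoc]
      _ = ∑ w, ∑ S : Finset (Fin m), chi7 S z * chi7 S w * μ w := Finset.sum_comm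
      _ = ∑ w, (∑ S : Finset (Fin m), chi7 S z * chi7 S w) * μ w := by
          simp [Finset.sum_mul]
      _ = ∑ w, (if z = w then (2:ℝ)^m else 0) * μ w := by
          simp only [orth7]
      _ = (2:ℝ)^m * μ z := by
          simp [ite_mul]
  have hempty : chi7 ∅ z * d ∅ = 1 := by
    simp [chi7, hd, hμ1]
  have hsplit : (2:ℝ)^m * μ z - 1
      = ∑ S ∈ (Finset.univ : Finset (Finset (Fin m))).erase ∅, chi7 S z * d S := by
    have h := Finset.sum_erase_add (Finset.univ : Finset (Finset (Fin m)))
      (fun S => chi7 S z * d S) (Finset.mem_univ ∅)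
    simp only [hempty] at h
    rw [hinv, ← h]
    ring
  have habs : |(2:ℝ)^m * μ z - 1| ≤ ε := by
    rw [hsplit]
    calc |∑ S ∈ (Finset.univ : Finset (Finset (Fin m))).erase ∅, chi7 S z * d S|
        ≤ ∑ S ∈ (Finset.univ : Finset (Finset (Fin m))).erase ∅, |chi7 S z * d S| :=
          Finset.abs_sum_le_sum_abs _ _
      _ ≤ ∑ S ∈ (Finset.univ : Finset (Finset (Fin m))).erase ∅, ε * ((1:ℝ)/(2*m)) ^ S.card := by
          refine Finset.sum_le_sum fun S hS => ?_
          have hSne : S.Nonempty := by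
            rcases Finset.eq_empty_or_nonempty S with h | h
            · exact absurd h (Finset.ne_of_mem_erase hS)
            · exact h
          have := hbias S hSne
          rw [dS_eq] at this
          rw [abs_mul, abs_chi7, one_mul]
          calc |d S| ≤ ε / (2 * (m:ℝ)) ^ S.card := this
            _ = ε * ((1:ℝ)/(2*m)) ^ S.card := by
                rw [div_pow, one_pow, mul_one_div]
      _ = ε * ∑ S ∈ (Finset.univ : Finset (Finset (Fin m))).erase ∅, ((1:ℝ)/(2*m)) ^ S.card := by
          rw [Finset.mul_sum]
      _ ≤ ε * 1 := by
          exact mul_le_mul_of_nonneg_left (comb_bound m) hε.le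
      _ = ε := mul_one ε
  rw [abs_le] at habs
  have hp : (0:ℝ) < 2^m := by positivity
  constructor
  · rw [mul_one_div, div_le_iff₀ hp]
    nlinarith [habs.1]
  · rw [mul_one_div, le_div_iff₀ hp]
    nlinarith [habs.2]
end

section
/- Let t ≥ 1 be an integer and Z a random variable on {0,1}^m. If for every S ⊆ [m] with |S| ≥ t, |Pr[⊕_{i∈S} Z_i = 0] − Pr[⊕_{i∈S} Z_i = 1]| ≤ (2m)^{−|S|}, then the min-entropy of Z satisfies H_∞(Z) ≥ m − t·log₂ m − 1. -/
namespace Stmt8Aux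

variable {m : ℕ}

/-- The character `χ_S`. -/
def chi (S : Finset (Fin m)) (z : Fin m → Bool) : ℝ :=
  ∏ i ∈ S, (if z i then (-1 : ℝ) else 1)

lemma chi_eq (S : Finset (Fin m)) (z : Fin m → Bool) :
    chi S z = if (∑ i ∈ S, if z i then (1 : ZMod 2) else 0) = 0 then 1 else -1 := by
  set n : ℕ := ∑ i ∈ S, (if z i then 1 else 0) with hn
  have h1 : chi S z = (-1 : ℝ) ^ n := by
    rw [hn, chi]
    rw [← Finset.prod_pow_eq_pow_sum]
    refine Finset.prod_congr rfl fun i _ => ?_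
    by_cases h : z i <;> simp [h]
  have h2 : (∑ i ∈ S, if z i then (1 : ZMod 2) else 0) = (n : ZMod 2) := by
    rw [hn, Nat.cast_sum]
    refine Finset.sum_congr rfl fun i _ => ?_
    by_cases h : z i <;> simp [h]
  rw [h1, h2]
  have : (n : ZMod 2) = 0 ↔ Even n := by
    rw [ZMod.natCast_eq_zero_iff, even_iff_two_dvd]
  by_cases h : Even n
  · rw [if_pos (this.mpr h), h.neg_one_pow]
  · rw [if_neg (fun hh => h (this.mp hh)), (Nat.not_even_iff_odd.mp h).neg_one_pow]

lemma abs_chi (S : Finset (Fin m)) (z : Fin m → Bool) : |chi S z| = 1 := by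
  rw [chi_eq]; split <;> norm_num

lemma orth (z x : Fin m → Bool) :
    ∑ S : Finset (Fin m), chi S z * chi S x = if x = z then (2 : ℝ) ^ m else 0 := by
  have key : ∀ S : Finset (Fin m),
      chi S z * chi S x = ∏ i ∈ S, (if z i = x i then (1 : ℝ) else -1) := by
    intro S
    rw [chi, chi, ← Finset.prod_mul_distrib]
    refine Finset.prod_congr rfl fun i _ => ?_
    by_cases hz : z i <;> by_cases hx : x i <;> simp [hz, hx]
  simp_rw [key]
  have hpa := Finset.prod_add (fun i => if z i = x i then (1 : ℝ) else -1)
    (fun _ => (1 : ℝ)) Finset.univ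
  simp only [Finset.prod_const_one, mul_one, Finset.powerset_univ] at hpa
  rw [← hpa]
  by_cases hxz : x = z
  · subst hxz
    rw [if_pos rfl]
    have : ∀ i ∈ Finset.univ, ((if x i = x i then (1:ℝ) else -1) + 1) = 2 := by
      intro i _; norm_num
    rw [Finset.prod_congr rfl this, Finset.prod_const, Finset.card_univ, Fintype.card_fin]
  · rw [if_neg hxz]
    obtain ⟨i, hi⟩ : ∃ i, z i ≠ x i := by
      by_contra h
      push_neg at h
      exact hxz (funext fun i => (h i).symm)
    refine Finset.prod_eq_zero (Finset.mem_univ i) ?_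
    rw [if_neg hi]; ring

lemma bias_eq (μ : (Fin m → Bool) → ℝ) (S : Finset (Fin m)) :
    prParity μ S 0 - prParity μ S 1 = ∑ x, μ x * chi S x := by
  rw [prParity, prParity, ← Finset.sum_sub_distrib]
  refine Finset.sum_congr rfl fun x _ => ?_
  rw [chi_eq]
  have h2 : ∀ p : ZMod 2, p = 0 ∨ p = 1 := by decide
  rcases h2 (∑ i ∈ S, if x i then (1 : ZMod 2) else 0) with h | h <;> rw [h] <;> norm_num

lemma inversion (μ : (Fin m → Bool) → ℝ) (z : Fin m → Bool) :
    (2 : ℝ) ^ m * μ z = ∑ S : Finset (Fin m), chi S z * (∑ x, μ x * chi S x) := by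
  have : ∀ S : Finset (Fin m), chi S z * (∑ x, μ x * chi S x)
      = ∑ x, μ x * (chi S z * chi S x) := by
    intro S; rw [Finset.mul_sum]; refine Finset.sum_congr rfl fun x _ => by ring
  simp_rw [this]
  rw [Finset.sum_comm]
  have : ∀ x : Fin m → Bool, ∑ S : Finset (Fin m), μ x * (chi S z * chi S x)
      = μ x * (if x = z then (2:ℝ)^m else 0) := by
    intro x; rw [← Finset.mul_sum, orth]
  simp_rw [this]
  simp only [mul_ite, mul_zero]
  rw [Finset.sum_ite_eq' Finset.univ z (fun x => μ x * (2:ℝ)^m)]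
  simp [mul_comm]

end Stmt8Aux

open Stmt8Aux in
/-- Variant of Vazirani's lemma in min-entropy form: if every parity over a set of size at
least `t` has bias at most `(2m)^{−|S|}`, then `H_∞(Z) ≥ m − t·log₂ m − 1`. -/
theorem stmt8 {m : ℕ} (hm : 2 ≤ m) (t : ℕ) (ht : 1 ≤ t)
    (μ : (Fin m → Bool) → ℝ) (hμ0 : ∀ z, 0 ≤ μ z) (hμ1 : ∑ z, μ z = 1)
    (hbias : ∀ S : Finset (Fin m), t ≤ S.card →
      |prParity μ S 0 - prParity μ S 1| ≤ 1 / (2 * (m : ℝ)) ^ S.card) :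
    (m : ℝ) - t * Real.logb 2 m - 1 ≤
      -Real.logb 2 (Finset.univ.sup' Finset.univ_nonempty μ) := by
  have hm1 : (1:ℝ) ≤ (m:ℝ) := by exact_mod_cast Nat.one_le_of_lt hm
  have hm0 : (0:ℝ) < (m:ℝ) := by linarith
  have hm2 : (2:ℝ) ≤ (m:ℝ) := by exact_mod_cast hm
  -- coefficient bound
  have hcoeff : ∀ S : Finset (Fin m),
      |∑ x, μ x * chi S x| ≤ if S.card < t then (1:ℝ) else 1 / (2 * (m:ℝ)) ^ S.card := by
    intro S
    by_cases h : S.card < t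
    · rw [if_pos h]
      calc |∑ x, μ x * chi S x| ≤ ∑ x, |μ x * chi S x| := Finset.abs_sum_le_sum_abs _ _
        _ = ∑ x, μ x := by
            refine Finset.sum_congr rfl fun x _ => ?_
            rw [abs_mul, abs_chi, mul_one, abs_of_nonneg (hμ0 x)]
        _ = 1 := hμ1
    · rw [if_neg h, ← bias_eq]
      exact hbias S (not_lt.mp h)
  -- sum over all S of the bound
  have hsum : ∑ S : Finset (Fin m),
      (if S.card < t then (1:ℝ) else 1 / (2 * (m:ℝ)) ^ S.card) ≤ 2 * (m:ℝ) ^ t := by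
    have hpw : (Finset.univ : Finset (Finset (Fin m))) = (Finset.univ : Finset (Fin m)).powerset :=
      Finset.powerset_univ.symm
    rw [hpw, Finset.sum_powerset_apply_card
      (fun k => if k < t then (1:ℝ) else 1 / (2 * (m:ℝ)) ^ k)]
    rw [Finset.card_univ, Fintype.card_fin]
    have hterm : ∀ k ∈ Finset.range (m + 1),
        (m.choose k) • (if k < t then (1:ℝ) else 1 / (2 * (m:ℝ)) ^ k)
        ≤ (if k < t then (m:ℝ) ^ k else (1/2 : ℝ) ^ k) := by
      intro k _
      rw [nsmul_eq_mul]
      have hch : (m.choose k : ℝ) ≤ (m:ℝ) ^ k := by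
        exact_mod_cast Nat.choose_le_pow m k
      by_cases h : k < t
      · rw [if_pos h, if_pos h, mul_one]; exact hch
      · rw [if_neg h, if_neg h]
        have h2m : (0:ℝ) < (2 * (m:ℝ)) ^ k := by positivity
        rw [mul_one_div, div_le_iff₀ h2m]
        calc (m.choose k : ℝ) ≤ (m:ℝ) ^ k := hch
          _ = (1/2:ℝ) ^ k * (2 * (m:ℝ)) ^ k := by
              rw [← mul_pow]; ring_nf
    calc ∑ k ∈ Finset.range (m+1),
          (m.choose k) • (if k < t then (1:ℝ) else 1 / (2 * (m:ℝ)) ^ k)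
        ≤ ∑ k ∈ Finset.range (m+1), (if k < t then (m:ℝ) ^ k else (1/2:ℝ) ^ k) :=
          Finset.sum_le_sum hterm
      _ ≤ ∑ k ∈ Finset.range (m+1), ((if k < t then (m:ℝ) ^ k else 0)
            + (if k < t then 0 else (1/2:ℝ) ^ k)) := by
          refine Finset.sum_le_sum fun k _ => ?_
          by_cases h : k < t <;> simp [h]
      _ = (∑ k ∈ Finset.range (m+1), if k < t then (m:ℝ) ^ k else 0)
            + ∑ k ∈ Finset.range (m+1), if k < t then 0 else (1/2:ℝ) ^ k :=
          Finset.sum_add_distrib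
      _ ≤ (∑ k ∈ Finset.range t, (m:ℝ) ^ k) + ∑' k : ℕ, (1/2:ℝ) ^ k := by
          gcongr
          · calc (∑ k ∈ Finset.range (m+1), if k < t then (m:ℝ) ^ k else 0)
                = ∑ k ∈ (Finset.range (m+1)).filter (· < t), (m:ℝ) ^ k :=
                  (Finset.sum_filter _ _).symm
              _ ≤ ∑ k ∈ Finset.range t, (m:ℝ) ^ k := by
                  refine Finset.sum_le_sum_of_subset_of_nonneg ?_ (fun k _ _ => by positivity)
                  intro k hk
                  simp only [Finset.mem_filter, Finset.mem_range] at hk ⊢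
                  exact hk.2
          · calc (∑ k ∈ Finset.range (m+1), if k < t then 0 else (1/2:ℝ) ^ k)
                ≤ ∑ k ∈ Finset.range (m+1), (1/2:ℝ) ^ k := by
                  refine Finset.sum_le_sum fun k _ => ?_
                  by_cases h : k < t <;> simp [h] <;> positivity
              _ ≤ ∑' k : ℕ, (1/2:ℝ) ^ k := by
                  refine Summable.sum_le_tsum _ (fun k _ => by positivity) ?_
                  exact summable_geometric_of_lt_one (by norm_num) (by norm_num)
      _ ≤ ((m:ℝ) ^ t - 1) + 2 := by
          gcongr
          · have hge : (∑ k ∈ Finset.range t, (m:ℝ) ^ k) = ((m:ℝ)^t - 1)/((m:ℝ) - 1) := by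
              rw [geom_sum_eq (by intro hh; rw [hh] at hm2; norm_num at hm2)]
            rw [hge]
            have h1 : (1:ℝ) ≤ (m:ℝ) - 1 := by
              have : (2:ℝ) ≤ (m:ℝ) := by exact_mod_cast hm
              linarith
            have hnum : (0:ℝ) ≤ (m:ℝ)^t - 1 := by
              have : (1:ℝ) ≤ (m:ℝ)^t := one_le_pow₀ hm1
              linarith
            exact div_le_self hnum h1
          · rw [tsum_geometric_of_lt_one (by norm_num) (by norm_num)]
            norm_num
      _ ≤ 2 * (m:ℝ) ^ t := by
          have : (1:ℝ) ≤ (m:ℝ)^t := one_le_pow₀ hm1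
          linarith
  -- pointwise bound on μ
  have hpoint : ∀ z, μ z ≤ 2 * (m:ℝ) ^ t / 2 ^ m := by
    intro z
    have h2m : (0:ℝ) < (2:ℝ) ^ m := by positivity
    rw [le_div_iff₀ h2m]
    have := inversion μ z
    calc μ z * 2 ^ m = (2:ℝ) ^ m * μ z := by ring
      _ = ∑ S : Finset (Fin m), chi S z * (∑ x, μ x * chi S x) := inversion μ z
      _ ≤ ∑ S : Finset (Fin m), |chi S z * (∑ x, μ x * chi S x)| :=
          Finset.sum_le_sum fun S _ => le_abs_self _
      _ = ∑ S : Finset (Fin m), |∑ x, μ x * chi S x| := by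
          refine Finset.sum_congr rfl fun S _ => ?_
          rw [abs_mul, abs_chi, one_mul]
      _ ≤ ∑ S : Finset (Fin m), (if S.card < t then (1:ℝ) else 1 / (2 * (m:ℝ)) ^ S.card) :=
          Finset.sum_le_sum fun S _ => hcoeff S
      _ ≤ 2 * (m:ℝ) ^ t := hsum
  -- positivity of the max
  set M := Finset.univ.sup' Finset.univ_nonempty μ with hM
  have hMpos : 0 < M := by
    by_contra h
    push_neg at h
    have : ∀ z : Fin m → Bool, μ z ≤ 0 := fun z =>
      le_trans (Finset.le_sup' μ (Finset.mem_univ z)) h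
    have : (∑ z, μ z) ≤ 0 := Finset.sum_nonpos fun z _ => this z
    linarith [hμ1 ▸ this]
  have hMle : M ≤ 2 * (m:ℝ) ^ t / 2 ^ m :=
    Finset.sup'_le _ _ fun z _ => hpoint z
  -- final log computation
  have hlog : Real.logb 2 M ≤ Real.logb 2 (2 * (m:ℝ) ^ t / 2 ^ m) :=
    Real.logb_le_logb_of_le (by norm_num) hMpos hMle
  have hcalc : Real.logb 2 (2 * (m:ℝ) ^ t / 2 ^ m)
      = 1 + t * Real.logb 2 m - m := by
    rw [div_eq_mul_inv, Real.logb_mul (by positivity) (by positivity),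
      Real.logb_mul (by norm_num) (by positivity), Real.logb_inv,
      Real.logb_pow, Real.logb_pow, Real.logb_self_eq_one (by norm_num)]
    ring
  rw [hcalc] at hlog
  linarith
end

section
/- Let g : {0,1}^b × {0,1}^b → {0,1} be the inner product function g(u,v) = ⊕_{i=1}^b (u_i·v_i). Then for every combinatorial rectangle R = S×T ⊆ {0,1}^b × {0,1}^b, the discrepancy disc_R(g) = |Pr[(U,V)∈R, g(U,V)=0] − Pr[(U,V)∈R, g(U,V)=1]| ≤ 2^{−b/2}, where U, V are independent uniform on {0,1}^b. -/
/-- `Pr[(U,V) ∈ S×T ∧ IP(U,V) = v]` for independent uniform `U, V ∈ {0,1}^b`, where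
`IP(u,w) = ⊕_i u_i·w_i` is the inner product function. -/
noncomputable def prIPRect {b : ℕ} (S T : Finset (Fin b → Bool)) (v : ZMod 2) : ℝ :=
  (∑ u : Fin b → Bool, ∑ w : Fin b → Bool,
      if u ∈ S ∧ w ∈ T ∧ (∑ i, if u i && w i then (1 : ZMod 2) else 0) = v
      then (1 : ℝ) else 0)
    / (2 ^ b * 2 ^ b)

namespace Stmt11Aux

noncomputable def eps (x : ZMod 2) : ℝ := if x = 0 then 1 else -1

def ip {b : ℕ} (u w : Fin b → Bool) : ZMod 2 := ∑ i, if u i && w i then 1 else 0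

lemma zmod2_cases (x : ZMod 2) : x = 0 ∨ x = 1 := by revert x; decide

lemma eps_add (x y : ZMod 2) : eps (x + y) = eps x * eps y := by
  rcases zmod2_cases x with rfl | rfl <;> rcases zmod2_cases y with rfl | rfl <;>
    simp [eps, show (1 : ZMod 2) + 1 = 0 by decide, show (1 : ZMod 2) ≠ 0 by decide] <;> norm_num

lemma eps_add_one (x : ZMod 2) : eps (1 + x) = - eps x := by
  rcases zmod2_cases x with rfl | rfl <;>
    simp [eps, show (1 : ZMod 2) + 1 = 0 by decide, show (1 : ZMod 2) ≠ 0 by decide]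

lemma ip_add {b : ℕ} (u u' w : Fin b → Bool) :
    ip u w + ip u' w = ip (fun i => xor (u i) (u' i)) w := by
  unfold ip
  rw [← Finset.sum_add_distrib]
  apply Finset.sum_congr rfl
  intro i _
  rcases hu : u i <;> rcases hu' : u' i <;> rcases hw : w i <;>
    simp_all [show (1 : ZMod 2) + 1 = 0 by decide]

lemma ip_update {b : ℕ} (z w : Fin b → Bool) (i₀ : Fin b) (hz : z i₀ = true) :
    ip z (Function.update w i₀ (! w i₀)) = 1 + ip z w := by
  have key : ip z (Function.update w i₀ (! w i₀)) + ip z w = 1 := by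
    unfold ip
    rw [← Finset.sum_add_distrib]
    have : ∀ i ∈ Finset.univ, ((if z i && (Function.update w i₀ (! w i₀)) i then (1 : ZMod 2) else 0)
        + (if z i && w i then 1 else 0)) = if i = i₀ then 1 else 0 := by
      intro i _
      rcases eq_or_ne i i₀ with rfl | hne
      · simp [Function.update_self, hz]
        rcases hw : w i <;> decide
      · rw [Function.update_of_ne hne]
        simp [hne]
        exact CharTwo.add_self_eq_zero _
    rw [Finset.sum_congr rfl this]
    simp
  have h2 : ip z w + ip z w = 0 := CharTwo.add_self_eq_zero _
  linear_combination key - h2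

lemma sum_eps_ip {b : ℕ} (z : Fin b → Bool) :
    ∑ w : Fin b → Bool, eps (ip z w) = if z = (fun _ => false) then (2 : ℝ) ^ b else 0 := by
  rcases eq_or_ne z (fun _ => false) with rfl | hz
  · simp only [if_pos rfl]
    have h1 : ∀ w : Fin b → Bool, eps (ip (fun _ => false) w) = 1 := by
      intro w
      have : ip (fun (_ : Fin b) => false) w = 0 := by unfold ip; simp
      simp [this, eps]
    calc ∑ w : Fin b → Bool, eps (ip (fun _ => false) w)
        = ∑ _w : Fin b → Bool, (1 : ℝ) := Finset.sum_congr rfl (fun w _ => h1 w)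
      _ = (2 : ℝ) ^ b := by
          rw [Finset.sum_const (b := (1:ℝ)), Finset.card_univ, nsmul_eq_mul, mul_one]
          norm_num
  · rw [if_neg hz]
    have : ∃ i₀ : Fin b, z i₀ = true := by
      by_contra h
      push_neg at h
      exact hz (funext fun i => by simpa using h i)
    obtain ⟨i₀, hi₀⟩ := this
    refine Finset.sum_involution (fun w _ => Function.update w i₀ (! w i₀)) ?_ ?_
      (fun w _ => Finset.mem_univ _) ?_
    · intro w _
      rw [ip_update z w i₀ hi₀, eps_add_one]
      ring
    · intro w _ _ h
      have := congrFun h i₀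
      simp at this
    · intro w _
      simp [Function.update_idem]

lemma sum_sq {b : ℕ} (S : Finset (Fin b → Bool)) :
    ∑ w : Fin b → Bool, (∑ u ∈ S, eps (ip u w)) ^ 2 = (S.card : ℝ) * 2 ^ b := by
  have step : ∀ w : Fin b → Bool, (∑ u ∈ S, eps (ip u w)) ^ 2
      = ∑ u ∈ S, ∑ u' ∈ S, eps (ip (fun i => xor (u i) (u' i)) w) := by
    intro w
    rw [sq, Finset.sum_mul_sum]
    apply Finset.sum_congr rfl; intro u _
    apply Finset.sum_congr rfl; intro u' _
    rw [← eps_add, ip_add]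
  rw [Finset.sum_congr rfl (fun w _ => step w), Finset.sum_comm]
  have swap : ∀ u ∈ S, (∑ w : Fin b → Bool, ∑ u' ∈ S, eps (ip (fun i => xor (u i) (u' i)) w))
      = ∑ u' ∈ S, ∑ w : Fin b → Bool, eps (ip (fun i => xor (u i) (u' i)) w) :=
    fun u _ => Finset.sum_comm
  rw [Finset.sum_congr rfl swap]
  have inner : ∀ u ∈ S, (∑ u' ∈ S, ∑ w : Fin b → Bool, eps (ip (fun i => xor (u i) (u' i)) w))
      = (2 : ℝ) ^ b := by
    intro u hu
    have : ∀ u' ∈ S, (∑ w : Fin b → Bool, eps (ip (fun i => xor (u i) (u' i)) w))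
        = if u' = u then (2 : ℝ) ^ b else 0 := by
      intro u' _
      rw [sum_eps_ip]
      congr 1
      simp only [eq_iff_iff]
      constructor
      · intro h
        funext i
        have := congrFun h i
        rcases hx : u i <;> rcases hy : u' i <;> simp_all
      · rintro rfl; funext i; simp
    rw [Finset.sum_congr rfl this, Finset.sum_ite_eq' S u (fun _ => (2:ℝ)^b), if_pos hu]
  rw [Finset.sum_congr rfl inner, Finset.sum_const, nsmul_eq_mul]

end Stmt11Aux

open Stmt11Aux in
/-- The inner product function has discrepancy at most `2^{−b/2}` with respect to every
combinatorial rectangle `R = S×T ⊆ {0,1}^b × {0,1}^b`. -/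
theorem stmt11 {b : ℕ} (hb : 0 < b) (S T : Finset (Fin b → Bool)) :
    |prIPRect S T 0 - prIPRect S T 1| ≤ (2 : ℝ) ^ (-(b : ℝ) / 2) := by
  set A : ℝ := ∑ w ∈ T, ∑ u ∈ S, eps (ip u w) with hA
  -- Step 1: the difference equals A / (2^b * 2^b)
  have hdiff : prIPRect S T 0 - prIPRect S T 1 = A / (2 ^ b * 2 ^ b) := by
    unfold prIPRect
    rw [div_sub_div_same]
    congr 1
    rw [← Finset.sum_sub_distrib]
    have pointwise : ∀ u : Fin b → Bool,
        ((∑ w : Fin b → Bool, if u ∈ S ∧ w ∈ T ∧ (∑ i, if u i && w i then (1 : ZMod 2) else 0) = 0 then (1:ℝ) else 0)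
        - ∑ w : Fin b → Bool, if u ∈ S ∧ w ∈ T ∧ (∑ i, if u i && w i then (1 : ZMod 2) else 0) = 1 then (1:ℝ) else 0)
        = ∑ w : Fin b → Bool, if u ∈ S then (if w ∈ T then eps (ip u w) else 0) else 0 := by
      intro u
      rw [← Finset.sum_sub_distrib]
      apply Finset.sum_congr rfl
      intro w _
      by_cases hS : u ∈ S <;> by_cases hT : w ∈ T <;>
        simp only [hS, hT, true_and, false_and, and_false, if_true, if_false, if_neg (fun h : False => h)] <;>
        try simp
      have h01 : ip u w = 0 ∨ ip u w = 1 := by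
        have : ∀ x : ZMod 2, x = 0 ∨ x = 1 := by decide
        exact this _
      rcases h01 with h | h <;>
        simp [ip] at h <;> simp [h, eps, ip, show (0 : ZMod 2) ≠ 1 by decide]
    rw [Finset.sum_congr rfl (fun u _ => pointwise u)]
    have : ∀ u : Fin b → Bool,
        (∑ w : Fin b → Bool, if u ∈ S then (if w ∈ T then eps (ip u w) else 0) else 0)
        = if u ∈ S then (∑ w ∈ T, eps (ip u w)) else 0 := by
      intro u
      by_cases hS : u ∈ S
      · simp only [hS, if_true]
        rw [Finset.sum_ite_mem, Finset.univ_inter]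
      · simp [hS]
    rw [Finset.sum_congr rfl (fun u _ => this u), Finset.sum_ite_mem, Finset.univ_inter]
    rw [hA, Finset.sum_comm]
  -- Step 2: A^2 ≤ 2^(3b)
  have hA2 : A ^ 2 ≤ (2 : ℝ) ^ (3 * b) := by
    have cs : A ^ 2 ≤ (∑ w ∈ T, (∑ u ∈ S, eps (ip u w)) ^ 2) * (∑ w ∈ T, (1:ℝ) ^ 2) := by
      have := Finset.sum_mul_sq_le_sq_mul_sq T (fun w => ∑ u ∈ S, eps (ip u w)) (fun _ => (1:ℝ))
      simpa using this
    have h1 : (∑ w ∈ T, (∑ u ∈ S, eps (ip u w)) ^ 2) ≤ ∑ w : Fin b → Bool, (∑ u ∈ S, eps (ip u w)) ^ 2 :=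
      Finset.sum_le_sum_of_subset_of_nonneg (Finset.subset_univ T) (fun _ _ _ => sq_nonneg _)
    have h2 : (∑ w : Fin b → Bool, (∑ u ∈ S, eps (ip u w)) ^ 2) = (S.card : ℝ) * 2 ^ b := sum_sq S
    have hScard : (S.card : ℝ) ≤ 2 ^ b := by
      have := Finset.card_le_univ S
      have hcard : (Finset.univ : Finset (Fin b → Bool)).card = 2 ^ b := by
        simp [Finset.card_univ]
      calc (S.card : ℝ) ≤ ((Finset.univ : Finset (Fin b → Bool)).card : ℝ) := by exact_mod_cast this
        _ = 2 ^ b := by rw [hcard]; push_cast; ring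
    have hTcard : (∑ w ∈ T, (1:ℝ) ^ 2) ≤ 2 ^ b := by
      have := Finset.card_le_univ T
      have hcard : (Finset.univ : Finset (Fin b → Bool)).card = 2 ^ b := by
        simp [Finset.card_univ]
      calc (∑ w ∈ T, (1:ℝ) ^ 2) = (T.card : ℝ) := by simp
        _ ≤ ((Finset.univ : Finset (Fin b → Bool)).card : ℝ) := by exact_mod_cast this
        _ = 2 ^ b := by rw [hcard]; push_cast; ring
    calc A ^ 2 ≤ (∑ w ∈ T, (∑ u ∈ S, eps (ip u w)) ^ 2) * (∑ w ∈ T, (1:ℝ) ^ 2) := cs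
      _ ≤ ((S.card : ℝ) * 2 ^ b) * 2 ^ b := by
          apply mul_le_mul (by rw [← h2]; exact h1) hTcard (Finset.sum_nonneg fun _ _ => sq_nonneg _)
          positivity
      _ ≤ (2 ^ b * 2 ^ b) * 2 ^ b := by
          apply mul_le_mul_of_nonneg_right (mul_le_mul_of_nonneg_right hScard (by positivity)) (by positivity)
      _ = 2 ^ (3 * b) := by ring
  -- Step 3: |A| ≤ 2^(3b/2)
  have habsA : |A| ≤ (2 : ℝ) ^ ((3 * (b:ℝ)) / 2) := by
    have h := Real.sqrt_le_sqrt hA2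
    rw [Real.sqrt_sq_eq_abs] at h
    calc |A| ≤ Real.sqrt ((2:ℝ) ^ (3 * b)) := h
      _ = (2 : ℝ) ^ ((3 * (b:ℝ)) / 2) := by
          rw [Real.sqrt_eq_rpow, ← Real.rpow_natCast 2 (3 * b),
            ← Real.rpow_mul (by norm_num : (0:ℝ) ≤ 2)]
          push_cast
          ring_nf
  -- Step 4: conclude
  have hden : ((2:ℝ) ^ b * 2 ^ b) = (2:ℝ) ^ (2 * (b:ℝ)) := by
    rw [← Real.rpow_natCast 2 b, ← Real.rpow_add (by norm_num : (0:ℝ) < 2)]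
    ring_nf
  have hfin : (2:ℝ) ^ ((3 * (b:ℝ)) / 2) / (2:ℝ) ^ (2 * (b:ℝ)) = (2:ℝ) ^ (-(b:ℝ) / 2) := by
    rw [← Real.rpow_sub (by norm_num : (0:ℝ) < 2)]
    ring_nf
  rw [hdiff, abs_div, abs_of_pos (by positivity : (0:ℝ) < 2 ^ b * 2 ^ b), hden, ← hfin]
  have hdpos : (0:ℝ) < (2:ℝ) ^ (2 * (b:ℝ)) := Real.rpow_pos_of_pos (by norm_num) _
  exact div_le_div_of_nonneg_right habsA hdpos.le |>.trans_eq rfl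
end

section
/- Let T ≥ 1 and define B = diag(I, I − U·e^{−1/T}) as a 2×2 block matrix where U is any (3T·2^n)-dimensional unitary satisfying U^{3T} = I. Then B is invertible, ‖B‖ ≤ 1 + e^{−1/T} < 2, and ‖B^{−1}‖ ≤ 1/(1 − e^{−1/T}) ≤ 2T; consequently the condition number κ = ‖B‖·‖B^{−1}‖ ≤ 4T. -/
open Matrix

/-- The block matrix `B = diag(I, I − U·e^{−1/T})`. -/
noncomputable def Bmat {d : ℕ} (T : ℕ) (U : Matrix (Fin d) (Fin d) ℂ) :
    Matrix (Fin d ⊕ Fin d) (Fin d ⊕ Fin d) ℂ :=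
  Matrix.fromBlocks 1 0 0 (1 - (Real.exp (-1 / (T : ℝ)) : ℂ) • U)

open scoped Matrix.Norms.L2Operator

set_option maxHeartbeats 1000000 in
/-- For `T ≥ 1` and any `3T·2^n`-dimensional unitary `U` with `U^{3T} = I`, the block matrix
`B = diag(I, I − U·e^{−1/T})` is invertible, with `‖B‖ ≤ 1 + e^{−1/T} < 2`,
`‖B⁻¹‖ ≤ 1/(1 − e^{−1/T}) ≤ 2T`, and condition number `κ = ‖B‖·‖B⁻¹‖ ≤ 4T`. -/
theorem stmt16 {n T : ℕ} (hT : 1 ≤ T)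
    (U : Matrix (Fin (3 * T * 2 ^ n)) (Fin (3 * T * 2 ^ n)) ℂ)
    (hU : U ∈ Matrix.unitaryGroup (Fin (3 * T * 2 ^ n)) ℂ)
    (hUT : U ^ (3 * T) = 1) :
    IsUnit (Bmat T U) ∧
    opNorm (Bmat T U) ≤ 1 + Real.exp (-1 / (T : ℝ)) ∧
    1 + Real.exp (-1 / (T : ℝ)) < 2 ∧
    opNorm ((Bmat T U)⁻¹) ≤ 1 / (1 - Real.exp (-1 / (T : ℝ))) ∧
    1 / (1 - Real.exp (-1 / (T : ℝ))) ≤ 2 * T ∧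
    opNorm (Bmat T U) * opNorm ((Bmat T U)⁻¹) ≤ 4 * T := by
  classical
  have hdpos : 0 < 3 * T * 2 ^ n := by positivity
  haveI : Nonempty (Fin (3 * T * 2 ^ n)) := ⟨⟨0, hdpos⟩⟩
  haveI : CompleteSpace (Matrix (Fin (3 * T * 2 ^ n) ⊕ Fin (3 * T * 2 ^ n))
      (Fin (3 * T * 2 ^ n) ⊕ Fin (3 * T * 2 ^ n)) ℂ) :=
    FiniteDimensional.complete ℂ _
  have hT0 : (0:ℝ) < T := by exact_mod_cast hT
  set c : ℝ := Real.exp (-1 / (T : ℝ)) with hc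
  have hc0 : 0 < c := Real.exp_pos _
  have hc1 : c < 1 := by
    rw [hc, Real.exp_lt_one_iff, neg_div]
    have : (0:ℝ) < 1 / T := by positivity
    linarith
  set V : Matrix (Fin (3 * T * 2 ^ n) ⊕ Fin (3 * T * 2 ^ n))
      (Fin (3 * T * 2 ^ n) ⊕ Fin (3 * T * 2 ^ n)) ℂ := Matrix.fromBlocks 0 0 0 U with hV
  set t := (c : ℂ) • V with ht
  have hB : Bmat T U = 1 - t := by
    rw [Bmat, ht, hV, Matrix.fromBlocks_smul, ← Matrix.fromBlocks_one (m := Fin (3 * T * 2 ^ n))]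
    simp only [smul_zero, sub_eq_add_neg, Matrix.fromBlocks_neg, Matrix.fromBlocks_add,
      add_zero, neg_zero]
    rfl
  have hUU : Uᴴ * U = 1 := by
    have h := hU.1
    rwa [Matrix.star_eq_conjTranspose] at h
  set P := Matrix.fromBlocks (0 : Matrix (Fin (3 * T * 2 ^ n)) (Fin (3 * T * 2 ^ n)) ℂ) 0 0
      (1 : Matrix (Fin (3 * T * 2 ^ n)) (Fin (3 * T * 2 ^ n)) ℂ) with hP
  have hVV : Vᴴ * V = P := by
    rw [hV, hP, Matrix.fromBlocks_conjTranspose, Matrix.fromBlocks_multiply]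
    simp [hUU]
  have hP2 : P * P = P := by
    rw [hP, Matrix.fromBlocks_multiply]; simp
  have hPH : Pᴴ = P := by
    rw [hP, Matrix.fromBlocks_conjTranspose]; simp
  have hPnorm : ‖P‖ = ‖P‖ * ‖P‖ := by
    have h := CStarRing.norm_star_mul_self (x := P)
    rw [Matrix.star_eq_conjTranspose, hPH, hP2] at h
    exact h
  have hPle : ‖P‖ ≤ 1 := by nlinarith [norm_nonneg P]
  have hV1 : ‖V‖ ≤ 1 := by
    have h := CStarRing.norm_star_mul_self (x := V)
    rw [Matrix.star_eq_conjTranspose, hVV] at h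
    nlinarith [norm_nonneg V]
  have htc : ‖t‖ ≤ c := by
    rw [ht, norm_smul]
    have hcc : ‖(c:ℂ)‖ = c := by rw [Complex.norm_real, Real.norm_of_nonneg hc0.le]
    rw [hcc]
    nlinarith [norm_nonneg V]
  have ht1 : ‖t‖ < 1 := lt_of_le_of_lt htc hc1
  have hBunit : IsUnit (Bmat T U) := by
    rw [hB]; exact isUnit_one_sub_of_norm_lt_one ht1
  have hBinv : (Bmat T U)⁻¹ = ∑' i : ℕ, t ^ i := by
    rw [Matrix.nonsing_inv_eq_ringInverse, hB, ← geom_series_eq_inverse t ht1]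
  have hsumnorm : ‖∑' i : ℕ, t ^ i‖ ≤ (1 - ‖t‖)⁻¹ := by
    exact tsum_of_norm_bounded (hasSum_geometric_of_lt_one (norm_nonneg t) ht1)
      (fun b => norm_pow_le t b)
  have hinvmono : (1 - ‖t‖)⁻¹ ≤ (1 - c)⁻¹ := by
    apply inv_anti₀ <;> linarith
  have hop : ∀ A : Matrix (Fin (3 * T * 2 ^ n) ⊕ Fin (3 * T * 2 ^ n))
      (Fin (3 * T * 2 ^ n) ⊕ Fin (3 * T * 2 ^ n)) ℂ, opNorm A = ‖A‖ := fun A => rfl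
  have hBn : opNorm (Bmat T U) ≤ 1 + c := by
    rw [hop, hB]
    calc ‖1 - t‖ ≤ ‖(1 : Matrix _ _ ℂ)‖ + ‖t‖ := norm_sub_le _ _
      _ ≤ 1 + c := by rw [norm_one]; linarith
  have hBinvn : opNorm ((Bmat T U)⁻¹) ≤ 1 / (1 - c) := by
    rw [hop, hBinv, one_div]
    exact le_trans hsumnorm hinvmono
  have hkey : 1 / (1 - c) ≤ 2 * T := by
    have hw : (0:ℝ) < 1 / T := by positivity
    have hw1 : 1 / (T:ℝ) ≤ 1 := by
      rw [div_le_one hT0]; exact_mod_cast hT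
    have hexp : 1 / (T:ℝ) + 1 ≤ Real.exp (1 / T) := Real.add_one_le_exp _
    have hcinv : c = (Real.exp (1 / T))⁻¹ := by
      rw [hc, ← Real.exp_neg, neg_div]
    have hcle : c ≤ (1 + 1 / (T:ℝ))⁻¹ := by
      rw [hcinv]
      apply inv_anti₀ <;> linarith
    have h1c : 1 / (2 * (T:ℝ)) ≤ 1 - c := by
      have h2 : (1 + 1 / (T:ℝ))⁻¹ ≤ 1 - 1 / (2 * T) := by
        rw [inv_le_iff_one_le_mul₀ (by positivity)]
        have h3 : 1 / (2*(T:ℝ)) * (1 + 1/T) ≤ 1/T := by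
          rw [div_mul_eq_mul_div, one_mul, div_le_div_iff₀ (by positivity) hT0]
          have h4 : 1 / (T:ℝ) * T = 1 := by field_simp
          nlinarith
        nlinarith
      linarith
    have h2T : (0:ℝ) < 2 * T := by positivity
    rw [div_le_iff₀ (by linarith [show (0:ℝ) < 1/(2*(T:ℝ)) by positivity])]
    have h5 := mul_le_mul_of_nonneg_left h1c (le_of_lt h2T)
    rw [mul_one_div, div_self (ne_of_gt h2T)] at h5
    linarith
  refine ⟨hBunit, hBn, by linarith, hBinvn, hkey, ?_⟩
  have h0 : 0 ≤ opNorm ((Bmat T U)⁻¹) := by rw [hop]; exact norm_nonneg _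
  have h0' : 0 ≤ opNorm (Bmat T U) := by rw [hop]; exact norm_nonneg _
  calc opNorm (Bmat T U) * opNorm ((Bmat T U)⁻¹)
      ≤ 2 * (2 * T) := mul_le_mul (by linarith) (le_trans hBinvn hkey) h0 (by norm_num)
    _ = 4 * T := by ring
end
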